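/- The set of irrational numbers x ∈ (0,1) whose backward continued fraction digits are bounded, i.e. {x ∈ (0,1) \ ℚ : there exists N such that b_j(x) ≤ N for all j ≥ 1}, has Hausdorff dimension 1. -/

import Mathlib

open Filter MeasureTheory Set

/-- The Rényi (backward continued fraction) map `f(x) = 1/(1−x) − ⌊1/(1−x)⌋`. -/
noncomputable def renyi (x : ℝ) : ℝ := 1 / (1 - x) - (⌊1 / (1 - x)⌋ : ℤ)

/-- The `j`-th backward continued fraction digit (`j ≥ 1`):
`b_j(x) = ⌊1/(1 − f^{j−1}(x))⌋ + 1`. -/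
noncomputable def bcf (j : ℕ) (x : ℝ) : ℤ := ⌊1 / (1 - renyi^[j - 1] x)⌋ + 1

/-- Birkhoff sum `S_n φ = Σ_{j=0}^{n-1} φ ∘ f^j` for the Rényi map. -/
noncomputable def birkR (φ : ℝ → ℝ) (n : ℕ) (x : ℝ) : ℝ :=
  ∑ j ∈ Finset.range n, φ (renyi^[j] x)

/-- The derivative of the `n`-th iterate of the Rényi map:
`(fⁿ)'(x) = ∏_{j=0}^{n−1} (1 − f^j(x))^{−2}`. -/
noncomputable def renyiDn (n : ℕ) (x : ℝ) : ℝ :=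
  ∏ j ∈ Finset.range n, ((1 - renyi^[j] x)⁻¹) ^ 2

/-- The cylinder `Δ_w = {x ∈ [0,1) : b_j(x) = w_j for 1 ≤ j ≤ n}` of a word
`w` of length `n` of integers. -/
def rcyl (n : ℕ) (w : Fin n → ℤ) : Set ℝ :=
  {x ∈ Set.Ico (0 : ℝ) 1 | ∀ i : Fin n, bcf ((i : ℕ) + 1) x = w i}

/-- `φ` belongs to the class `𝓕` for the Rényi map: there is a bound `D n` on
`S_nφ(x) − S_nφ(y)` over pairs `x, y` in a common `n`-cylinder (in particular
`D_1(φ) < ∞`), with `D n / n → 0` (i.e. `D_n(φ) = o(n)`). -/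
def MemFR (φ : ℝ → ℝ) : Prop :=
  ∃ D : ℕ → ℝ,
    (∀ n : ℕ, ∀ w : Fin n → ℤ, (∀ i, 2 ≤ w i) →
      ∀ x ∈ rcyl n w, ∀ y ∈ rcyl n w, birkR φ n x - birkR φ n y ≤ D n) ∧
    Tendsto (fun n : ℕ => D n / n) atTop (nhds 0)

namespace RBD

structure M2 where
  p : ℤ
  q : ℤ
  r : ℤ
  s : ℤ

def idM : M2 := ⟨1, 0, 0, 1⟩

def mulM (A B : M2) : M2 :=
  ⟨A.p * B.p + A.q * B.r, A.p * B.q + A.q * B.s,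
   A.r * B.p + A.s * B.r, A.r * B.q + A.s * B.s⟩

noncomputable def ap (A : M2) (y : ℝ) : ℝ :=
  ((A.p : ℝ) * y + A.q) / ((A.r : ℝ) * y + A.s)

structure Good (A : M2) : Prop where
  hp : 0 ≤ A.p
  hq : 0 ≤ A.q
  hr : 0 ≤ A.r
  hs : 0 < A.s
  det : A.p * A.s = A.q * A.r + 1
  hrs : A.r ≤ A.s
  hqs : A.q < A.s
  hpr : A.p ≤ A.r + 1

theorem good_id : Good idM := by
  constructor <;> simp [idM]

def bmat (k b : ℕ) : M2 :=
  ⟨1, (b : ℤ) - 2, (k : ℤ) + 1, ((k : ℤ) + 1) * ((b : ℤ) - 2) + 1⟩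

theorem good_bmat {k b : ℕ} (hb : 3 ≤ b) : Good (bmat k b) := by
  have hb' : (3 : ℤ) ≤ (b : ℤ) := by exact_mod_cast hb
  have hk : (0 : ℤ) ≤ (k : ℤ) := Int.ofNat_nonneg k
  have hβ : (1 : ℤ) ≤ (b : ℤ) - 2 := by linarith
  have h1 : (0:ℤ) ≤ (k:ℤ) * ((b:ℤ) - 2) := mul_nonneg hk (by linarith)
  constructor <;> simp only [bmat] <;> nlinarith [h1]

theorem mulM_assoc (A B C : M2) : mulM (mulM A B) C = mulM A (mulM B C) := by
  simp only [mulM]; congr 1 <;> ring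

theorem mulM_id (A : M2) : mulM A idM = A := by
  simp only [mulM, idM]; cases A; congr <;> ring

theorem id_mulM (A : M2) : mulM idM A = A := by
  simp only [mulM, idM]; cases A; congr <;> ring

theorem good_mul_bmat {A : M2} {k b : ℕ} (hA : Good A) (hb : 3 ≤ b) :
    Good (mulM A (bmat k b)) := by
  obtain ⟨hp, hq, hr, hs, det, hrs, hqs, hpr⟩ := hA
  have hb' : (3 : ℤ) ≤ (b : ℤ) := by exact_mod_cast hb
  have hk : (0 : ℤ) ≤ (k : ℤ) := Int.ofNat_nonneg k
  set β : ℤ := (b : ℤ) - 2 with hβdef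
  set κ : ℤ := (k : ℤ) + 1 with hκdef
  have hβ1 : 1 ≤ β := by omega
  have hκ1 : 1 ≤ κ := by omega
  have hσ : 1 ≤ κ * β + 1 := by nlinarith
  have e1 : 0 ≤ A.q * κ := mul_nonneg hq (by linarith)
  have e2 : 0 ≤ A.p * β := mul_nonneg hp (by linarith)
  have e3 : 0 ≤ A.q * (κ * β + 1) := mul_nonneg hq (by linarith)
  have e4 : 0 ≤ A.s * κ := mul_nonneg hs.le (by linarith)
  have e5 : 0 ≤ A.r * β := mul_nonneg hr (by linarith)
  have e6 : A.s * 1 ≤ A.s * (κ * β + 1) := by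
    apply mul_le_mul_of_nonneg_left hσ hs.le
  have e7 : 0 ≤ A.r * (β - 1) := mul_nonneg hr (by linarith)
  have e8 : 0 ≤ A.s * (κ * (β - 1)) := mul_nonneg hs.le (mul_nonneg (by linarith) (by linarith))
  have e9 : (A.p - A.r) * β ≤ 1 * β := by
    apply mul_le_mul_of_nonneg_right (by linarith) (by linarith)
  have e10 : (A.q - A.s) * (κ * β + 1) ≤ (-1) * (κ * β + 1) := by
    apply mul_le_mul_of_nonneg_right (by linarith) (by linarith)
  have e11 : 1 * β ≤ κ * β := mul_le_mul_of_nonneg_right hκ1 (by linarith)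
  have e12 : (A.q - A.s) * κ ≤ (-1) * κ := by
    apply mul_le_mul_of_nonneg_right (by linarith) (by linarith)
  constructor <;> simp only [mulM, bmat, ← hβdef, ← hκdef]
  · linarith
  · linarith
  · linarith
  · linarith
  · linear_combination det
  · nlinarith
  · nlinarith
  · nlinarith

theorem s_grow {A : M2} {k b : ℕ} (hA : Good A) (hb : 3 ≤ b) :
    2 * A.s ≤ (mulM A (bmat k b)).s := by
  obtain ⟨hp, hq, hr, hs, det, hrs, hqs, hpr⟩ := hA
  have hb' : (3 : ℤ) ≤ (b : ℤ) := by exact_mod_cast hb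
  have hk : (0 : ℤ) ≤ (k : ℤ) := Int.ofNat_nonneg k
  have e5 : 0 ≤ A.r * ((b:ℤ) - 2) := mul_nonneg hr (by linarith)
  have hσ : 2 ≤ ((k:ℤ)+1) * ((b:ℤ)-2) + 1 := by nlinarith
  have e6 : A.s * 2 ≤ A.s * (((k:ℤ)+1) * ((b:ℤ)-2) + 1) :=
    mul_le_mul_of_nonneg_left hσ hs.le
  simp only [mulM, bmat]
  linarith

theorem len_grow {A : M2} {k b : ℕ} (hA : Good A) (hb : 3 ≤ b) :
    3 * (A.s * (A.r + A.s)) ≤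
      (mulM A (bmat k b)).s * ((mulM A (bmat k b)).r + (mulM A (bmat k b)).s) := by
  obtain ⟨hp, hq, hr, hs, det, hrs, hqs, hpr⟩ := hA
  have hb' : (3 : ℤ) ≤ (b : ℤ) := by exact_mod_cast hb
  have hk : (0 : ℤ) ≤ (k : ℤ) := Int.ofNat_nonneg k
  simp only [mulM, bmat]
  set β : ℤ := (b : ℤ) - 2 with hβdef
  set κ : ℤ := (k : ℤ) + 1 with hκdef
  have hβ1 : 1 ≤ β := by omega
  have hκ1 : 1 ≤ κ := by omega
  rcases le_or_gt 2 β with h2 | h2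
  · -- s' ≥ 3 s and r'+s' ≥ r+s
    have hσ : 3 ≤ κ * β + 1 := by nlinarith
    have hs3 : 3 * A.s ≤ A.r * β + A.s * (κ * β + 1) := by
      have : A.s * 3 ≤ A.s * (κ * β + 1) := mul_le_mul_of_nonneg_left hσ hs.le
      have : 0 ≤ A.r * β := mul_nonneg hr (by linarith)
      linarith [mul_le_mul_of_nonneg_left hσ hs.le]
    have hrs2 : A.r + A.s ≤ (A.r * 1 + A.s * κ) + (A.r * β + A.s * (κ * β + 1)) := by
      have h1 : 0 ≤ A.s * κ := mul_nonneg hs.le (by linarith)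
      have h2 : 0 ≤ A.r * β := mul_nonneg hr (by linarith)
      have h3 : A.s * 1 ≤ A.s * (κ * β + 1) := by
        apply mul_le_mul_of_nonneg_left (by nlinarith) hs.le
      linarith
    calc 3 * (A.s * (A.r + A.s)) = (3 * A.s) * (A.r + A.s) := by ring
    _ ≤ (A.r * β + A.s * (κ * β + 1)) * ((A.r * 1 + A.s * κ) + (A.r * β + A.s * (κ * β + 1))) := by
        apply mul_le_mul hs3 hrs2 (by linarith) (by linarith)
    _ = (A.r * β + A.s * (κ * β + 1)) * (A.r * 1 + A.s * κ + (A.r * β + A.s * (κ * β + 1))) := by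
        ring
  · have hβ1' : β = 1 := by omega
    rw [hβ1']
    nlinarith [mul_nonneg hr hr, mul_nonneg (mul_nonneg hr hs.le) (by linarith : (0:ℤ) ≤ κ - 1),
      mul_pos hs hs, mul_nonneg (mul_nonneg hs.le hs.le) (by linarith : (0:ℤ) ≤ κ - 1),
      mul_nonneg (mul_nonneg (mul_nonneg hs.le hs.le) (by linarith : (0:ℤ) ≤ κ - 1)) (by linarith : (0:ℤ) ≤ κ - 1),
      mul_nonneg hr hs.le]

end RBD

namespace RBD
section Ap

variable {A B : M2}

theorem Good.sR (hA : Good A) : (0:ℝ) < (A.s : ℝ) := by exact_mod_cast hA.hs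
theorem Good.rR (hA : Good A) : (0:ℝ) ≤ (A.r : ℝ) := by exact_mod_cast hA.hr
theorem Good.pR (hA : Good A) : (0:ℝ) ≤ (A.p : ℝ) := by exact_mod_cast hA.hp
theorem Good.qR (hA : Good A) : (0:ℝ) ≤ (A.q : ℝ) := by exact_mod_cast hA.hq
theorem Good.detR (hA : Good A) : (A.p:ℝ) * A.s = (A.q:ℝ) * A.r + 1 := by exact_mod_cast hA.det

theorem denom_pos (hA : Good A) {y : ℝ} (hy : 0 ≤ y) : 0 < (A.r:ℝ) * y + A.s := by
  have := mul_nonneg hA.rR hy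
  linarith [hA.sR]

theorem num_nonneg (hA : Good A) {y : ℝ} (hy : 0 ≤ y) : 0 ≤ (A.p:ℝ) * y + A.q := by
  have := mul_nonneg hA.pR hy
  linarith [hA.qR]

theorem ap_nonneg (hA : Good A) {y : ℝ} (hy : 0 ≤ y) : 0 ≤ ap A y :=
  div_nonneg (num_nonneg hA hy) (denom_pos hA hy).le

theorem ap_sub (hA : Good A) {u v : ℝ} (hu : 0 ≤ u) (hv : 0 ≤ v) :
    ap A v - ap A u = (v - u) / (((A.r:ℝ) * u + A.s) * ((A.r:ℝ) * v + A.s)) := by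
  have h1 := denom_pos hA hu
  have h2 := denom_pos hA hv
  rw [ap, ap, div_sub_div _ _ h2.ne' h1.ne', div_eq_div_iff (by positivity) (by positivity)]
  linear_combination (((A.r:ℝ) * u + A.s) * ((A.r:ℝ) * v + A.s)) * (v - u) * hA.detR

theorem ap_mono (hA : Good A) {u v : ℝ} (hu : 0 ≤ u) (huv : u ≤ v) : ap A u ≤ ap A v := by
  have h := ap_sub hA hu (le_trans hu huv)
  have h1 := denom_pos hA hu
  have h2 := denom_pos hA (le_trans hu huv)
  nlinarith [div_nonneg (by linarith : (0:ℝ) ≤ v - u) (mul_pos h1 h2).le]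

theorem ap_strictMono (hA : Good A) {u v : ℝ} (hu : 0 ≤ u) (huv : u < v) : ap A u < ap A v := by
  have h := ap_sub hA hu (le_trans hu huv.le)
  have h1 := denom_pos hA hu
  have h2 := denom_pos hA (le_trans hu huv.le)
  nlinarith [div_pos (by linarith : (0:ℝ) < v - u) (mul_pos h1 h2)]

theorem ap_le_one (hA : Good A) {y : ℝ} (hy : 0 ≤ y) (hy1 : y ≤ 1) : ap A y ≤ 1 := by
  rw [ap, div_le_one (denom_pos hA hy)]
  have hq : (A.q:ℝ) + 1 ≤ A.s := by exact_mod_cast Int.lt_iff_add_one_le.mp hA.hqs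
  have hp : (A.p:ℝ) ≤ (A.r:ℝ) + 1 := by exact_mod_cast hA.hpr
  nlinarith [mul_le_mul_of_nonneg_right hp hy, mul_nonneg hA.rR hy]

theorem ap_lt_one (hA : Good A) {y : ℝ} (hy : 0 ≤ y) (hy1 : y < 1) : ap A y < 1 :=
  lt_of_lt_of_le (ap_strictMono hA hy hy1) (ap_le_one hA (by linarith) le_rfl)

theorem ap_zero (A : M2) : ap A 0 = (A.q:ℝ) / A.s := by simp [ap]

theorem ap_one (A : M2) : ap A 1 = ((A.p:ℝ) + A.q) / ((A.r:ℝ) + A.s) := by simp [ap]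

noncomputable def len (A : M2) : ℝ := 1 / ((A.s:ℝ) * ((A.r:ℝ) + A.s))

theorem len_eq (hA : Good A) : ap A 1 - ap A 0 = len A := by
  have h := ap_sub hA (le_refl (0:ℝ)) (zero_le_one)
  rw [h, len]
  norm_num

theorem len_pos (hA : Good A) : 0 < len A := by
  rw [len]
  have h1 := hA.sR
  have h2 := hA.rR
  have : (0:ℝ) < (A.s:ℝ) * ((A.r:ℝ) + A.s) := by nlinarith
  positivity

theorem len_ge (hA : Good A) : 1 / (2 * (A.s:ℝ)^2) ≤ len A := by
  rw [len]
  have h1 := hA.sR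
  have hrs : (A.r:ℝ) ≤ A.s := by exact_mod_cast hA.hrs
  have hpos : (0:ℝ) < (A.s:ℝ) * ((A.r:ℝ) + A.s) := by nlinarith [hA.rR]
  apply one_div_le_one_div_of_le hpos
  nlinarith

theorem ap_slope (hA : Good A) {u v : ℝ} (hu : 0 ≤ u) (huv : u ≤ v) :
    ap A v - ap A u ≤ (v - u) / ((A.s:ℝ)^2) := by
  rw [ap_sub hA hu (hu.trans huv)]
  have h1 := denom_pos hA hu
  have h2 := denom_pos hA (hu.trans huv)
  have hs := hA.sR
  have e1 : (A.s:ℝ)^2 ≤ ((A.r:ℝ) * u + A.s) * ((A.r:ℝ) * v + A.s) := by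
    nlinarith [mul_nonneg hA.rR hu, mul_nonneg hA.rR (hu.trans huv)]
  have hv : (0:ℝ) ≤ v - u := by linarith
  have hs2 : (0:ℝ) < (A.s:ℝ)^2 := by positivity
  gcongr

theorem ap_mul (hA : Good A) (hB : Good B) {y : ℝ} (hy : 0 ≤ y) :
    ap (mulM A B) y = ap A (ap B y) := by
  have h1 := denom_pos hB hy
  have hnum := num_nonneg hB hy
  have h3 := denom_pos hA (ap_nonneg hB hy)
  rw [ap] at h3
  have h2 : (0:ℝ) < ((mulM A B).r:ℝ) * y + ((mulM A B).s:ℝ) := by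
    simp only [mulM]
    push_cast
    nlinarith [mul_nonneg hA.rR hnum, mul_pos hA.sR h1]
  rw [ap, ap, ap, div_eq_div_iff h2.ne' h3.ne']
  simp only [mulM]
  push_cast
  field_simp
  ring

end Ap
end RBD

namespace RBD
section Letters

/-- letter index `i < (N+1)*(N-2)` codes the pair `(k, b)`:
`k` twos followed by digit `b ∈ [3, N]`, ordered spatially (k descending, b ascending). -/
def ltrk (N i : ℕ) : ℕ := N - i / (N - 2)
def ltrb (N i : ℕ) : ℕ := 3 + i % (N - 2)
def Mn (N : ℕ) : ℕ := (N + 1) * (N - 2)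

def lmat (N i : ℕ) : M2 := bmat (ltrk N i) (ltrb N i)

theorem ltrb_ge (N i : ℕ) : 3 ≤ ltrb N i := Nat.le_add_right 3 _

theorem ltrb_le {N : ℕ} (hN : 3 ≤ N) (i : ℕ) : ltrb N i ≤ N := by
  have h : i % (N - 2) < N - 2 := Nat.mod_lt _ (by omega)
  unfold ltrb
  omega

theorem good_lmat (N i : ℕ) : Good (lmat N i) := good_bmat (ltrb_ge N i)

/-- real left endpoint of the base interval of letter `(k, b)` -/
noncomputable def luv (k b : ℕ) : ℝ := ((b:ℝ) - 2) / (((k:ℝ) + 1) * ((b:ℝ) - 2) + 1)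

theorem luv_denom_pos {k b : ℕ} (hb : 3 ≤ b) : 0 < ((k:ℝ) + 1) * ((b:ℝ) - 2) + 1 := by
  have hb' : (3:ℝ) ≤ (b:ℝ) := by exact_mod_cast hb
  have hk : (0:ℝ) ≤ (k:ℝ) := Nat.cast_nonneg k
  nlinarith

theorem luv_pos {k b : ℕ} (hb : 3 ≤ b) : 0 < luv k b := by
  have hb' : (3:ℝ) ≤ (b:ℝ) := by exact_mod_cast hb
  exact div_pos (by linarith) (luv_denom_pos hb)

theorem ap_bmat_zero {k b : ℕ} : ap (bmat k b) 0 = luv k b := by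
  rw [ap_zero, luv, bmat]
  push_cast
  ring_nf

theorem ap_bmat_one {k b : ℕ} (hb : 3 ≤ b) : ap (bmat k b) 1 = luv k (b + 1) := by
  rw [ap_one, luv, bmat]
  have hb' : (3:ℝ) ≤ (b:ℝ) := by exact_mod_cast hb
  have hk : (0:ℝ) ≤ (k:ℝ) := Nat.cast_nonneg k
  push_cast
  rw [div_eq_div_iff (by nlinarith) (by nlinarith)]
  ring

theorem luv_mono {k b b' : ℕ} (hb : 3 ≤ b) (hbb : b ≤ b') : luv k b ≤ luv k b' := by
  have hb'3 : 3 ≤ b' := hb.trans hbb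
  have h1 := luv_denom_pos (k := k) hb
  have h2 := luv_denom_pos (k := k) hb'3
  rw [luv, luv, div_le_div_iff₀ h1 h2]
  have c1 : (3:ℝ) ≤ (b:ℝ) := by exact_mod_cast hb
  have c2 : (b:ℝ) ≤ (b':ℝ) := by exact_mod_cast hbb
  have hk : (0:ℝ) ≤ (k:ℝ) := Nat.cast_nonneg k
  nlinarith

theorem luv_lt_inv {k b : ℕ} (hb : 3 ≤ b) : luv k (b + 1) < 1 / ((k:ℝ) + 1) := by
  have h1 : 3 ≤ b + 1 := by omega
  have h2 := luv_denom_pos (k := k) h1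
  have hk : (0:ℝ) < (k:ℝ) + 1 := by positivity
  rw [luv, div_lt_div_iff₀ h2 hk]
  push_cast
  nlinarith

theorem inv_le_luv {k b : ℕ} (hb : 3 ≤ b) : 1 / ((k:ℝ) + 2) ≤ luv k b := by
  have h2 := luv_denom_pos (k := k) hb
  have hk : (0:ℝ) < (k:ℝ) + 2 := by positivity
  rw [luv, div_le_div_iff₀ hk h2]
  have c1 : (3:ℝ) ≤ (b:ℝ) := by exact_mod_cast hb
  have hk0 : (0:ℝ) ≤ (k:ℝ) := Nat.cast_nonneg k
  nlinarith

/-- spatial sortedness of the letters. -/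
theorem letters_sorted {N i j : ℕ} (hN : 3 ≤ N) (hij : i < j) (hj : j < Mn N) :
    ap (lmat N i) 1 ≤ ap (lmat N j) 0 := by
  rw [lmat, lmat, ap_bmat_one (ltrb_ge N i), ap_bmat_zero]
  have hd : 0 < N - 2 := by omega
  have hqj : j / (N - 2) < N + 1 := Nat.div_lt_of_lt_mul (by unfold Mn at hj; rwa [Nat.mul_comm] at hj)
  have hq : i / (N - 2) ≤ j / (N - 2) := Nat.div_le_div_right hij.le
  have e1 := Nat.div_add_mod i (N - 2)
  have e2 := Nat.div_add_mod j (N - 2)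
  rcases eq_or_lt_of_le hq with he | hlt
  · -- same block: same k, larger b
    have hkk : ltrk N i = ltrk N j := by unfold ltrk; omega
    have hbb : ltrb N i < ltrb N j := by
      unfold ltrb
      have h3 : (N-2) * (i / (N-2)) = (N-2) * (j / (N-2)) := by rw [he]
      omega
    rw [hkk]
    exact luv_mono (by have := ltrb_ge N i; omega) hbb
  · -- different blocks: k decreases
    have hkk : ltrk N j < ltrk N i := by unfold ltrk; omega
    have l1 := luv_lt_inv (k := ltrk N i) (ltrb_ge N i)
    have l2 := inv_le_luv (k := ltrk N j) (ltrb_ge N j)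
    have l3 : 1 / ((ltrk N i : ℝ) + 1) ≤ 1 / ((ltrk N j : ℝ) + 2) := by
      apply one_div_le_one_div_of_le (by positivity)
      have : (ltrk N j : ℝ) + 1 ≤ (ltrk N i : ℝ) := by exact_mod_cast hkk
      linarith
    linarith

/-- bound on the letters' s entry -/
theorem lmat_s_le {N : ℕ} (hN : 3 ≤ N) (i : ℕ) : (lmat N i).s ≤ (N:ℤ)^2 := by
  have h1 : ltrk N i ≤ N := Nat.sub_le _ _
  have h2 : ltrb N i ≤ N := ltrb_le hN i
  have h3 : 3 ≤ ltrb N i := ltrb_ge N i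
  rw [lmat, bmat]
  have c1 : (ltrk N i : ℤ) ≤ (N:ℤ) := by exact_mod_cast h1
  have c2 : (ltrb N i : ℤ) ≤ (N:ℤ) := by exact_mod_cast h2
  have c3 : (3:ℤ) ≤ (ltrb N i : ℤ) := by exact_mod_cast h3
  have c4 : (3:ℤ) ≤ (N:ℤ) := by exact_mod_cast hN
  have c0 : (0:ℤ) ≤ (ltrk N i : ℤ) := Int.ofNat_nonneg _
  show ((ltrk N i : ℤ) + 1) * ((ltrb N i : ℤ) - 2) + 1 ≤ (N:ℤ)^2
  nlinarith

end Letters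

section Words

variable (N : ℕ) (ω : ℕ → ℕ)

def pm : ℕ → M2
  | 0 => idM
  | n + 1 => mulM (pm n) (lmat N (ω n))

theorem pm_succ (n : ℕ) : pm N ω (n+1) = mulM (pm N ω n) (bmat (ltrk N (ω n)) (ltrb N (ω n))) := rfl

theorem good_pm (n : ℕ) : Good (pm N ω n) := by
  induction n with
  | zero => exact good_id
  | succ n ih => exact good_mul_bmat ih (ltrb_ge N _)

theorem pm_s_ge (n : ℕ) : 2^n ≤ (pm N ω n).s := by
  induction n with
  | zero => simp [pm, idM]
  | succ n ih =>
      have h := s_grow (k := ltrk N (ω n)) (good_pm N ω n) (ltrb_ge N (ω n))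
      rw [pm_succ]
      calc (2:ℤ)^(n+1) = 2 * 2^n := by ring
      _ ≤ 2 * (pm N ω n).s := by linarith [pow_pos (by norm_num : (0:ℤ) < 2) n]
      _ ≤ _ := h

theorem len_pm_zero : len (pm N ω 0) = 1 := by
  simp [pm, idM, len]

theorem len_pm_succ_le (n : ℕ) : len (pm N ω (n+1)) ≤ len (pm N ω n) / 3 := by
  have h := len_grow (good_pm N ω n) (k := ltrk N (ω n)) (b := ltrb N (ω n)) (ltrb_ge N (ω n))
  rw [← pm_succ] at h
  have hA := good_pm N ω n
  have hA' := good_pm N ω (n+1)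
  have p1 : (0:ℝ) < ((pm N ω n).s : ℝ) * (((pm N ω n).r : ℝ) + ((pm N ω n).s : ℝ)) := by
    nlinarith [hA.sR, hA.rR]
  have hc : 3 * (((pm N ω n).s : ℝ) * (((pm N ω n).r : ℝ) + ((pm N ω n).s : ℝ)))
      ≤ ((pm N ω (n+1)).s : ℝ) * (((pm N ω (n+1)).r : ℝ) + ((pm N ω (n+1)).s : ℝ)) := by
    exact_mod_cast h
  rw [len, len, div_div]
  apply one_div_le_one_div_of_le (by positivity)
  linarith

theorem len_pm_le_pow (n : ℕ) : len (pm N ω n) ≤ (1/3:ℝ)^n := by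
  induction n with
  | zero => simp [len_pm_zero]
  | succ n ih =>
      have h := len_pm_succ_le N ω n
      calc len (pm N ω (n+1)) ≤ len (pm N ω n) / 3 := h
      _ ≤ (1/3:ℝ)^n / 3 := by linarith
      _ = (1/3:ℝ)^(n+1) := by ring

theorem pm_congr {N : ℕ} {ω ω' : ℕ → ℕ} {n : ℕ} (h : ∀ k < n, ω k = ω' k) :
    pm N ω n = pm N ω' n := by
  induction n with
  | zero => rfl
  | succ n ih =>
      show mulM (pm N ω n) (lmat N (ω n)) = mulM (pm N ω' n) (lmat N (ω' n))
      rw [ih (fun k hk => h k (by omega)), h n (by omega)]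

theorem pm_shift (n j : ℕ) : pm N ω (n + j) = mulM (pm N ω n) (pm N (fun m => ω (n + m)) j) := by
  induction j with
  | zero => simp [pm, mulM_id]
  | succ j ih =>
      show pm N ω (n + j + 1) = _
      show mulM (pm N ω (n+j)) (lmat N (ω (n+j))) = _
      rw [ih]
      show _ = mulM (pm N ω n) (mulM (pm N (fun m => ω (n + m)) j) (lmat N (ω (n + j))))
      rw [mulM_assoc]

theorem pm_one : pm N ω 1 = lmat N (ω 0) := by
  show mulM idM (lmat N (ω 0)) = lmat N (ω 0)
  exact id_mulM _

end Words
end RBD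

namespace RBD
section XrDef

variable (N : ℕ) (ω : ℕ → ℕ)

/-- left endpoint of the level-`n` cylinder -/
noncomputable def lep (n : ℕ) : ℝ := ap (pm N ω n) 0

theorem lep_nonneg (n : ℕ) : 0 ≤ lep N ω n := ap_nonneg (good_pm N ω n) le_rfl

theorem lep_lt_one (n : ℕ) : lep N ω n < 1 := ap_lt_one (good_pm N ω n) le_rfl one_pos

theorem lep_zero : lep N ω 0 = 0 := by simp [lep, pm, ap_zero, idM]

theorem ap_lmat_zero_pos (i : ℕ) : 0 < ap (lmat N i) 0 := by
  rw [lmat, ap_bmat_zero]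
  exact luv_pos (ltrb_ge N i)

theorem lep_succ (n : ℕ) : lep N ω (n+1) = ap (pm N ω n) (ap (lmat N (ω n)) 0) := by
  rw [lep]
  show ap (mulM (pm N ω n) (lmat N (ω n))) 0 = _
  rw [ap_mul (good_pm N ω n) (good_lmat N (ω n)) le_rfl]

theorem lep_mono : Monotone (lep N ω) := by
  apply monotone_nat_of_le_succ
  intro n
  rw [lep_succ, lep]
  exact ap_mono (good_pm N ω n) le_rfl (ap_nonneg (good_lmat N (ω n)) le_rfl)

theorem lep_lt_succ (n : ℕ) : lep N ω n < lep N ω (n+1) := by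
  rw [lep_succ, lep]
  exact ap_strictMono (good_pm N ω n) le_rfl (ap_lmat_zero_pos N (ω n))

noncomputable def Xr : ℝ := ⨆ n, lep N ω n

theorem lep_bdd : BddAbove (Set.range (lep N ω)) := by
  refine ⟨1, ?_⟩
  rintro x ⟨n, rfl⟩
  exact (lep_lt_one N ω n).le

theorem lep_le_Xr (n : ℕ) : lep N ω n ≤ Xr N ω := le_ciSup (lep_bdd N ω) n

theorem tendsto_lep : Filter.Tendsto (lep N ω) Filter.atTop (nhds (Xr N ω)) :=
  tendsto_atTop_ciSup (lep_mono N ω) (lep_bdd N ω)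

/-- any word value at level ≥ 1 is at most `1 - 1/N`. -/
theorem lep_suffix_le {N : ℕ} (hN : 3 ≤ N) (ω : ℕ → ℕ) (j : ℕ) (hj : 1 ≤ j) :
    lep N ω j ≤ 1 - 1/(N:ℝ) := by
  obtain ⟨j', rfl⟩ : ∃ j', j = 1 + j' := ⟨j - 1, by omega⟩
  have h := pm_shift N ω 1 j'
  rw [lep, h, pm_one, ap_mul (good_lmat N (ω 0)) (good_pm N _ j') le_rfl]
  have h1 : ap (pm N (fun m => ω (1 + m)) j') 0 ≤ 1 := ap_le_one (good_pm N _ j') le_rfl zero_le_one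
  have h0 : 0 ≤ ap (pm N (fun m => ω (1 + m)) j') 0 := ap_nonneg (good_pm N _ j') le_rfl
  have h2 : ap (lmat N (ω 0)) (ap (pm N (fun m => ω (1 + m)) j') 0) ≤ ap (lmat N (ω 0)) 1 :=
    ap_mono (good_lmat N (ω 0)) h0 h1
  refine h2.trans ?_
  -- `ap (lmat i) 1 = luv k (b+1) ≤ 1 - 1/N`
  rw [lmat, ap_bmat_one (ltrb_ge N (ω 0))]
  set k := ltrk N (ω 0)
  set b := ltrb N (ω 0)
  have hb3 : 3 ≤ b := ltrb_ge N (ω 0)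
  have hbN : b ≤ N := ltrb_le hN (ω 0)
  have hNR : (3:ℝ) ≤ (N:ℝ) := by exact_mod_cast hN
  have hbR : (b:ℝ) ≤ (N:ℝ) := by exact_mod_cast hbN
  have hb3R : (3:ℝ) ≤ (b:ℝ) := by exact_mod_cast hb3
  have hkR : (0:ℝ) ≤ (k:ℝ) := Nat.cast_nonneg k
  have hd := luv_denom_pos (k := k) (b := b + 1) (by omega)
  rw [luv]
  rw [div_le_iff₀ hd]
  push_cast at hd ⊢
  have hN0 : (0:ℝ) < (N:ℝ) := by linarith
  rw [sub_mul, one_mul]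
  have key : ((k:ℝ)+1)*((b:ℝ)-1) + 1 - (1/(N:ℝ)) * (((k:ℝ)+1)*((b:ℝ)-1)+1) ≥ (b:ℝ) - 1 := by
    have e1 : (1/(N:ℝ)) * (((k:ℝ)+1)*((b:ℝ)-1)+1) ≤ (1/(N:ℝ)) * ((N:ℝ) * ((k:ℝ)+1)) := by
      apply mul_le_mul_of_nonneg_left _ (by positivity)
      nlinarith
    have e2 : (1/(N:ℝ)) * ((N:ℝ) * ((k:ℝ)+1)) = (k:ℝ)+1 := by field_simp
    nlinarith
  linarith [key]

theorem Xr_le_ap {N : ℕ} (hN : 3 ≤ N) (ω : ℕ → ℕ) (n : ℕ) :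
    Xr N ω ≤ ap (pm N ω n) (1 - 1/(N:ℝ)) := by
  have hvN : (0:ℝ) ≤ 1 - 1/(N:ℝ) := by
    have : (3:ℝ) ≤ (N:ℝ) := by exact_mod_cast hN
    have : 1/(N:ℝ) ≤ 1/3 := by
      apply one_div_le_one_div_of_le <;> linarith
    linarith
  apply ciSup_le
  intro m
  rcases le_or_gt m n with hmn | hnm
  · calc lep N ω m ≤ lep N ω n := lep_mono N ω hmn
    _ = ap (pm N ω n) 0 := rfl
    _ ≤ _ := ap_mono (good_pm N ω n) le_rfl hvN
  · obtain ⟨j, rfl⟩ : ∃ j, m = n + j := ⟨m - n, by omega⟩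
    have hj : 1 ≤ j := by omega
    rw [lep, pm_shift N ω n j, ap_mul (good_pm N ω n) (good_pm N _ j) le_rfl]
    apply ap_mono (good_pm N ω n) (ap_nonneg (good_pm N _ j) le_rfl)
    exact lep_suffix_le hN _ j hj

theorem Xr_nonneg : 0 ≤ Xr N ω := by
  have := lep_le_Xr N ω 0
  rw [lep_zero] at this
  linarith

theorem Xr_le_vN {N : ℕ} (hN : 3 ≤ N) (ω : ℕ → ℕ) : Xr N ω ≤ 1 - 1/(N:ℝ) := by
  have h := Xr_le_ap hN ω 0
  have : ap (pm N ω 0) (1 - 1/(N:ℝ)) = 1 - 1/(N:ℝ) := by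
    show ap idM _ = _
    rw [ap]
    simp [idM]
  rwa [this] at h

theorem Xr_lt_one {N : ℕ} (hN : 3 ≤ N) (ω : ℕ → ℕ) : Xr N ω < 1 := by
  have h := Xr_le_vN hN ω
  have hN0 : (0:ℝ) < (N:ℝ) := by exact_mod_cast (by omega : 0 < N)
  have : 0 < 1/(N:ℝ) := by positivity
  linarith

theorem Xr_pos (n : ℕ) : lep N ω n < Xr N ω :=
  lt_of_lt_of_le (lep_lt_succ N ω n) (lep_le_Xr N ω (n+1))

theorem Xr_pos' : 0 < Xr N ω := by
  have := Xr_pos N ω 0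
  rwa [lep_zero] at this

/-- `Xr` of the shifted word. -/
theorem Xr_shift {N : ℕ} (hN : 3 ≤ N) (ω : ℕ → ℕ) :
    Xr N ω = ap (lmat N (ω 0)) (Xr N (fun m => ω (1 + m))) := by
  set σω := fun m => ω (1 + m) with hσ
  have hYnn : 0 ≤ Xr N σω := Xr_nonneg N σω
  have hB := good_lmat N (ω 0)
  -- continuity of ap at the limit
  have hden : ((lmat N (ω 0)).r : ℝ) * Xr N σω + (lmat N (ω 0)).s ≠ 0 :=
    (denom_pos hB hYnn).ne'
  have t2 : Filter.Tendsto (fun j => ap (lmat N (ω 0)) (lep N σω j)) Filter.atTop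
      (nhds (ap (lmat N (ω 0)) (Xr N σω))) := by
    have tl := tendsto_lep N σω
    rw [ap]
    apply Filter.Tendsto.div
    · exact (tl.const_mul _).add_const _
    · exact (tl.const_mul _).add_const _
    · exact hden
  have key : ∀ j, lep N ω (j + 1) = ap (lmat N (ω 0)) (lep N σω j) := by
    intro j
    rw [lep, lep, show j + 1 = 1 + j by omega, pm_shift N ω 1 j, pm_one,
      ap_mul hB (good_pm N σω j) le_rfl]
  have t1 : Filter.Tendsto (fun j => lep N ω (j + 1)) Filter.atTop (nhds (Xr N ω)) :=
    (tendsto_lep N ω).comp (Filter.tendsto_add_atTop_nat 1)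
  have t1' : Filter.Tendsto (fun j => ap (lmat N (ω 0)) (lep N σω j)) Filter.atTop
      (nhds (Xr N ω)) := by
    apply t1.congr
    intro j
    exact key j
  exact tendsto_nhds_unique t1' t2

end XrDef
end RBD

namespace RBD
section Peel

def dmat2 : M2 := ⟨1, 0, 1, 1⟩

theorem good_dmat2 : Good dmat2 := by constructor <;> simp [dmat2]

theorem mulM_dmat2_bmat (k b : ℕ) : mulM dmat2 (bmat k b) = bmat (k+1) b := by
  simp only [mulM, dmat2, bmat]
  congr 1 <;> push_cast <;> ring

theorem renyi_peel2 {y : ℝ} (h0 : 0 ≤ y) (h1 : y < 1) : renyi (ap dmat2 y) = y := by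
  have hd : (0:ℝ) < y + 1 := by linarith
  have hx : ap dmat2 y = y / (y + 1) := by
    rw [ap, dmat2]
    norm_num
  have h1x : 1 - ap dmat2 y = 1 / (y + 1) := by
    rw [hx]
    field_simp
    ring
  have h2x : 1 / (1 - ap dmat2 y) = y + 1 := by
    rw [h1x, one_div_one_div]
  have hfl : ⌊y + 1⌋ = 1 := by
    have h0' : ⌊y⌋ = 0 := Int.floor_eq_zero_iff.mpr ⟨h0, h1⟩
    have h := Int.floor_add_one y
    omega
  rw [renyi, h2x, hfl]
  push_cast
  ring

theorem renyi_peelb {b : ℕ} (hb : 3 ≤ b) {y : ℝ} (h0 : 0 ≤ y) (h1 : y < 1) :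
    renyi (ap (bmat 0 b) y) = y := by
  have hbR : (3:ℝ) ≤ (b:ℝ) := by exact_mod_cast hb
  have hd : (0:ℝ) < y + ((b:ℝ) - 1) := by linarith
  have e : ap (bmat 0 b) y = (y + ((b:ℝ)-2)) / (y + ((b:ℝ)-1)) := by
    rw [ap, bmat]
    push_cast
    congr 1 <;> ring
  have h1x : 1 - ap (bmat 0 b) y = 1 / (y + ((b:ℝ)-1)) := by
    rw [e]
    field_simp
    ring
  have h2x : 1 / (1 - ap (bmat 0 b) y) = y + ((b:ℝ)-1) := by
    rw [h1x, one_div_one_div]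
  have hcast : ((b:ℝ) - 1) = (((b:ℤ) - 1 : ℤ) : ℝ) := by push_cast; ring
  have hfl : ⌊y + ((b:ℝ)-1)⌋ = (b:ℤ) - 1 := by
    rw [hcast, Int.floor_add_intCast y ((b:ℤ) - 1), Int.floor_eq_zero_iff.mpr ⟨h0, h1⟩]
    ring
  rw [renyi, h2x, hfl]
  push_cast
  ring

theorem ap_bmat_mem {k b : ℕ} (hb : 3 ≤ b) {z : ℝ} (h0 : 0 ≤ z) (h1 : z < 1) :
    0 ≤ ap (bmat k b) z ∧ ap (bmat k b) z < 1 :=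
  ⟨ap_nonneg (good_bmat hb) h0, ap_lt_one (good_bmat hb) h0 h1⟩

theorem renyi_peel_step {k b : ℕ} (hb : 3 ≤ b) {z : ℝ} (h0 : 0 ≤ z) (h1 : z < 1) :
    renyi (ap (bmat (k+1) b) z) = ap (bmat k b) z := by
  have hcomp : ap (bmat (k+1) b) z = ap dmat2 (ap (bmat k b) z) := by
    rw [← mulM_dmat2_bmat, ap_mul good_dmat2 (good_bmat hb) h0]
  obtain ⟨m0, m1⟩ := ap_bmat_mem (k := k) hb h0 h1
  rw [hcomp, renyi_peel2 m0 m1]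

theorem renyi_iter_block {b : ℕ} (hb : 3 ≤ b) {z : ℝ} (h0 : 0 ≤ z) (h1 : z < 1) :
    ∀ i k : ℕ, i ≤ k → renyi^[i] (ap (bmat k b) z) = ap (bmat (k - i) b) z := by
  intro i
  induction i with
  | zero => intro k _; simp
  | succ i ih =>
      intro k hik
      rw [Function.iterate_succ_apply', ih k (by omega)]
      have : k - i = (k - (i+1)) + 1 := by omega
      rw [this, renyi_peel_step hb h0 h1]

theorem renyi_block_exit {b : ℕ} (hb : 3 ≤ b) {z : ℝ} (h0 : 0 ≤ z) (h1 : z < 1) (k : ℕ) :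
    renyi^[k + 1] (ap (bmat k b) z) = z := by
  rw [Function.iterate_succ_apply', renyi_iter_block hb h0 h1 k k le_rfl, Nat.sub_self,
    renyi_peelb hb h0 h1]

/-- upper bound for intermediate points -/
theorem mid_bound {κ b N : ℕ} (hN : 3 ≤ N) (hb : 3 ≤ b) (hbN : b ≤ N) {z : ℝ}
    (h0 : 0 ≤ z) (h1 : z ≤ 1 - 1/(N:ℝ)) : ap (bmat κ b) z ≤ 1 - 1/(N:ℝ) := by
  have hNR : (3:ℝ) ≤ (N:ℝ) := by exact_mod_cast hN
  have hbR : (3:ℝ) ≤ (b:ℝ) := by exact_mod_cast hb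
  have hbNR : (b:ℝ) ≤ (N:ℝ) := by exact_mod_cast hbN
  have hz1 : z < 1 := by
    have : 0 < 1/(N:ℝ) := by positivity
    linarith
  rcases Nat.eq_zero_or_pos κ with hκ | hκ
  · subst hκ
    have e : ap (bmat 0 b) z = (z + ((b:ℝ)-2)) / (z + ((b:ℝ)-1)) := by
      rw [ap, bmat]
      push_cast
      congr 1 <;> ring
    rw [e, div_le_iff₀ (by linarith)]
    have hN0 : (0:ℝ) < (N:ℝ) := by linarith
    have e2 : (1/(N:ℝ)) * (N:ℝ) = 1 := by field_simp
    nlinarith [mul_le_mul_of_nonneg_left (by linarith : z + (b:ℝ) ≤ (N:ℝ) + 1) (by positivity : (0:ℝ) ≤ 1/(N:ℝ))]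
  · -- κ ≥ 1 : value < 1/(κ+1) ≤ 1/2 ≤ 1 - 1/N
    have h2 : ap (bmat κ b) z ≤ ap (bmat κ b) 1 := ap_mono (good_bmat hb) h0 hz1.le
    rw [ap_bmat_one hb] at h2
    have h3 := luv_lt_inv (k := κ) hb
    have hκR : (1:ℝ) ≤ (κ:ℝ) := by exact_mod_cast hκ
    have h4 : 1 / ((κ:ℝ) + 1) ≤ 1/2 := by
      apply one_div_le_one_div_of_le <;> linarith
    have h5 : 1/(N:ℝ) ≤ 1/3 := by
      apply one_div_le_one_div_of_le <;> linarith
    linarith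

end Peel

section Digits

variable (N : ℕ) (ω : ℕ → ℕ)

/-- shifted word -/
def shf (n : ℕ) (ω : ℕ → ℕ) : ℕ → ℕ := fun m => ω (n + m)

/-- cumulative digit count of the first `n` blocks -/
noncomputable def cn (n : ℕ) : ℕ := ∑ m ∈ Finset.range n, (ltrk N (ω m) + 1)

theorem cn_succ (n : ℕ) : cn N ω (n+1) = (ltrk N (ω n) + 1) + cn N ω n := by
  rw [cn, cn, Finset.sum_range_succ]
  omega

theorem shf_shf (n : ℕ) : shf 1 (shf n ω) = shf (n+1) ω := by
  funext m
  simp [shf]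
  congr 1
  omega

theorem Y_eq (hN : 3 ≤ N) (n : ℕ) :
    Xr N (shf n ω) = ap (lmat N (ω n)) (Xr N (shf (n+1) ω)) := by
  have h := Xr_shift hN (shf n ω)
  have e0 : shf n ω 0 = ω n := by simp [shf]
  have e1 : (fun m => shf n ω (1 + m)) = shf (n+1) ω := by
    funext m
    simp only [shf]
    congr 1
    omega
  rw [e0, e1] at h
  exact h

theorem Y_nonneg (n : ℕ) : 0 ≤ Xr N (shf n ω) := Xr_nonneg N _

theorem Y_le (hN : 3 ≤ N) (n : ℕ) : Xr N (shf n ω) ≤ 1 - 1/(N:ℝ) := Xr_le_vN hN _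

theorem Y_lt_one (hN : 3 ≤ N) (n : ℕ) : Xr N (shf n ω) < 1 := Xr_lt_one hN _

theorem iter_cn (hN : 3 ≤ N) (n : ℕ) :
    renyi^[cn N ω n] (Xr N ω) = Xr N (shf n ω) := by
  induction n with
  | zero =>
      have : shf 0 ω = ω := by funext m; simp [shf]
      simp [cn, this]
  | succ n ih =>
      rw [cn_succ, Function.iterate_add_apply, ih]
      have hY := Y_eq N ω hN n
      rw [hY, lmat]
      exact renyi_block_exit (ltrb_ge N (ω n)) (Y_nonneg N ω (n+1)) (Y_lt_one N ω hN (n+1)) _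

theorem iter_mid (hN : 3 ≤ N) (n i : ℕ) (hi : i ≤ ltrk N (ω n)) :
    renyi^[cn N ω n + i] (Xr N ω)
      = ap (bmat (ltrk N (ω n) - i) (ltrb N (ω n))) (Xr N (shf (n+1) ω)) := by
  rw [add_comm, Function.iterate_add_apply, iter_cn N ω hN n, Y_eq N ω hN n, lmat]
  exact renyi_iter_block (ltrb_ge N (ω n)) (Y_nonneg N ω (n+1)) (Y_lt_one N ω hN (n+1)) i _ hi

theorem exists_block (j : ℕ) : ∃ n i, i ≤ ltrk N (ω n) ∧ j = cn N ω n + i := by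
  induction j with
  | zero => exact ⟨0, 0, Nat.zero_le _, by simp [cn]⟩
  | succ j ih =>
      obtain ⟨n, i, hi, rfl⟩ := ih
      rcases lt_or_eq_of_le hi with hlt | heq
      · exact ⟨n, i + 1, by omega, by omega⟩
      · refine ⟨n + 1, 0, Nat.zero_le _, ?_⟩
        rw [cn_succ]
        omega

theorem iter_bound (hN : 3 ≤ N) (j : ℕ) :
    0 ≤ renyi^[j] (Xr N ω) ∧ renyi^[j] (Xr N ω) ≤ 1 - 1/(N:ℝ) := by
  obtain ⟨n, i, hi, rfl⟩ := exists_block N ω j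
  rw [iter_mid N ω hN n i hi]
  constructor
  · exact ap_nonneg (good_bmat (ltrb_ge N (ω n))) (Y_nonneg N ω (n+1))
  · exact mid_bound hN (ltrb_ge N (ω n)) (ltrb_le hN (ω n)) (Y_nonneg N ω (n+1)) (Y_le N ω hN (n+1))

theorem bcf_le (hN : 3 ≤ N) (j : ℕ) (hj : 1 ≤ j) : bcf j (Xr N ω) ≤ (N:ℤ) + 1 := by
  obtain ⟨h0, h1⟩ := iter_bound N ω hN (j-1)
  rw [bcf]
  have hNR : (3:ℝ) ≤ (N:ℝ) := by exact_mod_cast hN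
  set t := renyi^[j-1] (Xr N ω)
  have ht : 1/(N:ℝ) ≤ 1 - t := by linarith
  have hpos : (0:ℝ) < 1 - t := lt_of_lt_of_le (by positivity) ht
  have h2 : 1/(1 - t) ≤ (N:ℝ) := by
    rw [div_le_iff₀ hpos]
    have h3 : (N:ℝ) * (1/(N:ℝ)) = 1 := by field_simp
    nlinarith
  have h4 : ⌊1/(1 - t)⌋ ≤ (N:ℤ) := by
    have := Int.floor_le_floor h2
    rwa [Int.floor_natCast] at this
  omega

theorem Xr_irrational (hN : 3 ≤ N) : Irrational (Xr N ω) := by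
  rw [Irrational]
  rintro ⟨a, ha⟩
  set c : ℕ := a.den with hc
  set p : ℤ := a.num with hp
  have hc0 : 0 < c := a.pos
  -- choose n with c < 2^n
  obtain ⟨n, hn⟩ : ∃ n, c < 2^n := ⟨c, Nat.lt_two_pow_self⟩
  have hA := good_pm N ω n
  have hsn : (2:ℤ)^n ≤ (pm N ω n).s := pm_s_ge N ω n
  have hcs : (c:ℝ) < ((pm N ω n).s : ℝ) := by
    have h1 : ((2:ℤ)^n : ℝ) ≤ ((pm N ω n).s : ℝ) := by exact_mod_cast hsn
    have h2 : (c:ℝ) < ((2:ℤ)^n : ℝ) := by push_cast; exact_mod_cast hn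
    linarith
  have hlow : ap (pm N ω n) 0 < Xr N ω := Xr_pos N ω n
  have hepos : (0:ℝ) ≤ 1 - 1/(N:ℝ) := by
    have : (3:ℝ) ≤ (N:ℝ) := by exact_mod_cast hN
    have : 1/(N:ℝ) ≤ 1/3 := by apply one_div_le_one_div_of_le <;> linarith
    linarith
  have hup : Xr N ω < ap (pm N ω n) 1 := by
    calc Xr N ω ≤ ap (pm N ω n) (1 - 1/(N:ℝ)) := Xr_le_ap hN ω n
    _ < ap (pm N ω n) 1 := by
        apply ap_strictMono hA hepos
        have : (0:ℝ) < (N:ℝ) := by exact_mod_cast (by omega : 0 < N)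
        have : 0 < 1/(N:ℝ) := by positivity
        linarith
  have hXr : Xr N ω = (p:ℝ)/(c:ℝ) := by
    rw [← ha, Rat.cast_def]
  set S := pm N ω n
  have hsR := hA.sR
  have hrR := hA.rR
  have hrsR : (0:ℝ) < (S.r:ℝ) + S.s := by linarith
  have hcR : (0:ℝ) < (c:ℝ) := by exact_mod_cast hc0
  rw [ap_zero] at hlow
  rw [ap_one] at hup
  rw [hXr] at hlow hup
  -- integer gap: p * S.s - c * S.q ≥ 1
  have hint : (1:ℝ) ≤ (p:ℝ) * S.s - (c:ℝ) * S.q := by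
    have h1 : (S.q:ℝ) * c < (p:ℝ) * S.s := by
      rw [div_lt_div_iff₀ hsR hcR] at hlow
      linarith
    have h2 : S.q * (c:ℤ) < p * S.s := by exact_mod_cast h1
    have h3 : S.q * (c:ℤ) + 1 ≤ p * S.s := h2
    have h4 : ((S.q * (c:ℤ) + 1 : ℤ) : ℝ) ≤ ((p * S.s : ℤ) : ℝ) := by exact_mod_cast h3
    push_cast at h4
    linarith
  -- upper: p/c - q/s < len = 1/(s(r+s)), so (p s - c q) < c/(r+s) ≤ c/s < 1
  have hup2 : (p:ℝ)/c - (S.q:ℝ)/S.s < 1/((S.s:ℝ)*((S.r:ℝ)+S.s)) := by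
    have hl := len_eq hA
    rw [ap_one, ap_zero, len] at hl
    linarith
  have hkey : (p:ℝ)*S.s - (c:ℝ)*S.q < (c:ℝ)/((S.r:ℝ)+S.s) := by
    have e : (p:ℝ)/c - (S.q:ℝ)/S.s = ((p:ℝ)*S.s - (c:ℝ)*S.q)/((c:ℝ)*S.s) := by
      field_simp
    rw [e] at hup2
    have := (div_lt_div_iff₀ (by positivity) (by positivity)).mp hup2
    calc (p:ℝ)*S.s - (c:ℝ)*S.q = (((p:ℝ)*S.s - (c:ℝ)*S.q) * ((S.s:ℝ)*((S.r:ℝ)+S.s))) / ((S.s:ℝ)*((S.r:ℝ)+S.s)) := by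
          field_simp
    _ < ((c:ℝ)*S.s) / ((S.s:ℝ)*((S.r:ℝ)+S.s)) := by
          rw [one_mul] at this
          exact (div_lt_div_iff_of_pos_right (by positivity)).mpr this
    _ = (c:ℝ)/((S.r:ℝ)+S.s) := by
          field_simp
  have hfin : (c:ℝ)/((S.r:ℝ)+S.s) < 1 := by
    rw [div_lt_one hrsR]
    linarith
  linarith

end Digits
end RBD

namespace RBD
section Coverage

/-- total length of the base intervals of all letters. -/
noncomputable def covsum (N : ℕ) : ℝ :=
  ∑ i ∈ Finset.range (Mn N), (ap (lmat N i) 1 - ap (lmat N i) 0)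

noncomputable def delN (N : ℕ) : ℝ := 2/((N:ℝ)-1) + 1/((N:ℝ)+2)

theorem sum_range_mul {f : ℕ → ℝ} (J d : ℕ) :
    ∑ i ∈ Finset.range (J * d), f i = ∑ j ∈ Finset.range J, ∑ r ∈ Finset.range d, f (j * d + r) := by
  induction J with
  | zero => simp
  | succ J ih =>
      have h1 : (J+1) * d = J*d + d := by ring
      rw [h1, Finset.sum_range_succ, ← ih, Finset.sum_range_add]

theorem luv_three (k : ℕ) : luv k 3 = 1/((k:ℝ)+2) := by
  rw [luv]
  push_cast
  rw [show ((k:ℝ)+1)*((3:ℝ)-2)+1 = (k:ℝ)+2 by ring]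
  norm_num

theorem covsum_eq (hN : 3 ≤ N) :
    covsum N = ∑ k ∈ Finset.range (N+1), (luv k (N+1) - luv k 3) := by
  rw [covsum, Mn, sum_range_mul]
  have step1 : ∀ j ∈ Finset.range (N+1),
      ∑ r ∈ Finset.range (N-2), (ap (lmat N (j*(N-2)+r)) 1 - ap (lmat N (j*(N-2)+r)) 0)
        = luv (N - j) (N+1) - luv (N - j) 3 := by
    intro j hj
    rw [Finset.mem_range] at hj
    have hd : 0 < N - 2 := by omega
    have hidx : ∀ r, r < N - 2 → ltrk N (j*(N-2)+r) = N - j ∧ ltrb N (j*(N-2)+r) = 3 + r := by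
      intro r hr
      constructor
      · unfold ltrk
        rw [Nat.mul_comm j (N-2), Nat.mul_add_div hd, Nat.div_eq_of_lt hr]
        omega
      · unfold ltrb
        rw [Nat.mul_comm j (N-2), Nat.mul_add_mod, Nat.mod_eq_of_lt hr]
    have e : ∀ r ∈ Finset.range (N-2),
        (ap (lmat N (j*(N-2)+r)) 1 - ap (lmat N (j*(N-2)+r)) 0)
          = (luv (N-j) (3+(r+1)) - luv (N-j) (3+r)) := by
      intro r hr
      rw [Finset.mem_range] at hr
      obtain ⟨hk, hb⟩ := hidx r hr
      rw [lmat, hk, hb, ap_bmat_one (by omega), ap_bmat_zero]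
      congr 1 <;> omega
    have e2 : 3 + (N-2) = N + 1 := by omega
    rw [Finset.sum_congr rfl e, Finset.sum_range_sub (fun r => luv (N-j) (3+r)), e2]
  rw [Finset.sum_congr rfl step1]
  have hrefl := Finset.sum_range_reflect (fun k => luv k (N+1) - luv k 3) (N+1)
  rw [← hrefl]
  apply Finset.sum_congr rfl
  intro j hj
  rw [Finset.mem_range] at hj
  congr 2 <;> omega

theorem luv_deficit {N k : ℕ} (hN : 3 ≤ N) :
    1/((k:ℝ)+1) - luv k (N+1) ≤ (2/((N:ℝ)-1)) * (1/((k:ℝ)+1) - 1/((k:ℝ)+2)) := by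
  have hNR : (3:ℝ) ≤ (N:ℝ) := by exact_mod_cast hN
  have hkR : (0:ℝ) ≤ (k:ℝ) := Nat.cast_nonneg k
  have hD : (0:ℝ) < ((k:ℝ)+1)*((N:ℝ)-1)+1 := by nlinarith
  have e1 : luv k (N+1) = ((N:ℝ)-1)/(((k:ℝ)+1)*((N:ℝ)-1)+1) := by
    rw [luv]
    push_cast
    congr 1 <;> ring
  have e2 : 1/((k:ℝ)+1) - ((N:ℝ)-1)/(((k:ℝ)+1)*((N:ℝ)-1)+1)
      = 1/(((k:ℝ)+1)*(((k:ℝ)+1)*((N:ℝ)-1)+1)) := by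
    field_simp
    try ring
  have e3 : (2/((N:ℝ)-1)) * (1/((k:ℝ)+1) - 1/((k:ℝ)+2))
      = 2/(((N:ℝ)-1)*(((k:ℝ)+1)*((k:ℝ)+2))) := by
    field_simp
    try ring
  rw [e1, e2, e3]
  rw [div_le_div_iff₀ (by positivity) (by nlinarith)]
  nlinarith

theorem luv_le_inv {k b : ℕ} (hb : 3 ≤ b) : luv k b ≤ 1/((k:ℝ)+1) := by
  rcases Nat.exists_eq_add_of_le hb with ⟨c, rfl⟩
  have h1 := luv_mono (k := k) (b := 3+c) (b' := 3+c+1) (by omega) (by omega)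
  have h2 := luv_lt_inv (k := k) (b := 3+c) (by omega)
  linarith

theorem covsum_ge {N : ℕ} (hN : 3 ≤ N) : 1 - delN N ≤ covsum N := by
  rw [covsum_eq hN]
  have hNR : (3:ℝ) ≤ (N:ℝ) := by exact_mod_cast hN
  -- per-term bound
  have key : ∀ k ∈ Finset.range (N+1),
      (1/((k:ℝ)+1) - 1/((k:ℝ)+2)) - (2/((N:ℝ)-1)) * (1/((k:ℝ)+1) - 1/((k:ℝ)+2))
        ≤ luv k (N+1) - luv k 3 := by
    intro k _
    have h1 := luv_deficit (N := N) (k := k) hN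
    have h2 := luv_three k
    linarith
  have hsum := Finset.sum_le_sum key
  -- telescoping sums
  have htel : ∑ k ∈ Finset.range (N+1), (1/((k:ℝ)+1) - 1/((k:ℝ)+2)) = 1 - 1/((N:ℝ)+2) := by
    have h := Finset.sum_range_sub' (fun k : ℕ => 1/((k:ℝ)+1)) (N+1)
    have e : ∀ k ∈ Finset.range (N+1),
        (1/((k:ℝ)+1) - 1/((k:ℝ)+2)) = (1/((k:ℝ)+1) - 1/(((k+1:ℕ):ℝ)+1)) := by
      intro k _
      congr 2
      push_cast
      ring
    rw [Finset.sum_congr rfl e, h]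
    push_cast
    ring_nf
  have htel2 : ∑ k ∈ Finset.range (N+1),
      ((1/((k:ℝ)+1) - 1/((k:ℝ)+2)) - (2/((N:ℝ)-1)) * (1/((k:ℝ)+1) - 1/((k:ℝ)+2)))
      = (1 - 2/((N:ℝ)-1)) * (1 - 1/((N:ℝ)+2)) := by
    rw [Finset.sum_sub_distrib, ← Finset.mul_sum, htel]
    ring
  rw [htel2] at hsum
  refine le_trans ?_ hsum
  rw [delN]
  have h1 : 0 ≤ 2/((N:ℝ)-1) := div_nonneg (by norm_num) (by linarith)
  have h2 : 0 ≤ 1/((N:ℝ)+2) := div_nonneg (by norm_num) (by linarith)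
  have h3 : 0 ≤ (2/((N:ℝ)-1)) * (1/((N:ℝ)+2)) := mul_nonneg h1 h2
  nlinarith

theorem delN_le {N : ℕ} (hN : 25 ≤ N) : delN N ≤ 1/8 := by
  have hNR : (25:ℝ) ≤ (N:ℝ) := by exact_mod_cast hN
  rw [delN]
  have h1 : 2/((N:ℝ)-1) ≤ 2/24 := by
    apply div_le_div_of_nonneg_left (by norm_num) (by norm_num) (by linarith)
  have h2 : 1/((N:ℝ)+2) ≤ 1/27 := by
    apply div_le_div_of_nonneg_left (by norm_num) (by norm_num) (by linarith)
  norm_num at h1 h2 ⊢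
  linarith

end Coverage

section ChildSum

variable (N : ℕ)

/-- total length of the children cylinders of `A`. -/
noncomputable def Ls (A : M2) : ℝ :=
  ∑ i ∈ Finset.range (Mn N), len (mulM A (lmat N i))

theorem len_mul_eq {A : M2} (hA : Good A) (i : ℕ) :
    len (mulM A (lmat N i)) = ap A (ap (lmat N i) 1) - ap A (ap (lmat N i) 0) := by
  have hB := good_lmat N i
  have hAB : Good (mulM A (lmat N i)) := good_mul_bmat hA (ltrb_ge N i)
  rw [← len_eq hAB, ap_mul hA hB (le_refl (0:ℝ)), ap_mul hA hB zero_le_one]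

/-- endpoint used for the telescoping argument. -/
noncomputable def endpt (m : ℕ) : ℝ := if m = 0 then 0 else ap (lmat N (m-1)) 1

theorem Ls_key {A : M2} (hA : Good A) (hN : 3 ≤ N) :
    ∀ m, m ≤ Mn N →
      ap A (endpt N m) - ap A 0 ≤
        (∑ i ∈ Finset.range m, (ap A (ap (lmat N i) 1) - ap A (ap (lmat N i) 0)))
          + (1/((A.s:ℝ)^2)) * ((endpt N m)
            - ∑ i ∈ Finset.range m, (ap (lmat N i) 1 - ap (lmat N i) 0)) := by
  intro m
  induction m with
  | zero =>
      intro _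
      simp [endpt]
  | succ m ih =>
      intro hm
      have ihm := ih (by omega)
      have hu0 : (0:ℝ) ≤ ap (lmat N m) 0 := ap_nonneg (good_lmat N m) le_rfl
      have huv : ap (lmat N m) 0 ≤ ap (lmat N m) 1 :=
        (ap_strictMono (good_lmat N m) le_rfl one_pos).le
      have hend0 : 0 ≤ endpt N m := by
        rw [endpt]
        split
        · exact le_rfl
        · exact ap_nonneg (good_lmat N _) zero_le_one
      have hendu : endpt N m ≤ ap (lmat N m) 0 := by
        rw [endpt]
        split
        next h => exact hu0
        next h =>
          exact letters_sorted hN (by omega) (by omega)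
      have hslope := ap_slope hA hend0 hendu
      have hend1 : endpt N (m+1) = ap (lmat N m) 1 := by
        rw [endpt]
        simp
      rw [hend1, Finset.sum_range_succ, Finset.sum_range_succ]
      have exp : ap A (ap (lmat N m) 1) - ap A 0
          = (ap A (endpt N m) - ap A 0) + (ap A (ap (lmat N m) 0) - ap A (endpt N m))
            + (ap A (ap (lmat N m) 1) - ap A (ap (lmat N m) 0)) := by ring
      rw [exp]
      have h2 : (0:ℝ) < (A.s:ℝ)^2 := by
        have := hA.sR
        positivity
      have hs2 : (1:ℝ)/((A.s:ℝ)^2) * (ap (lmat N m) 0 - endpt N m)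
          = (ap (lmat N m) 0 - endpt N m)/((A.s:ℝ)^2) := by ring
      nlinarith [hslope]

theorem Ls_ge {A : M2} (hA : Good A) (hN : 3 ≤ N) :
    len A - (1/((A.s:ℝ)^2)) * (1 - covsum N) ≤ Ls N A := by
  have hMn : 0 < Mn N := by
    rw [Mn]
    have : 0 < N - 2 := by omega
    positivity
  have hkey := Ls_key N hA hN (Mn N) le_rfl
  have hend : endpt N (Mn N) = ap (lmat N (Mn N - 1)) 1 := by
    rw [endpt, if_neg (by omega)]
  have hend1 : endpt N (Mn N) ≤ 1 := by
    rw [hend]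
    exact ap_le_one (good_lmat N _) zero_le_one le_rfl
  have hend0 : 0 ≤ endpt N (Mn N) := by
    rw [hend]
    exact ap_nonneg (good_lmat N _) zero_le_one
  have hlast := ap_slope hA hend0 hend1
  have hlen := len_eq hA
  have h2 : (0:ℝ) < (A.s:ℝ)^2 := by
    have := hA.sR
    positivity
  have hLs : Ls N A = ∑ i ∈ Finset.range (Mn N), (ap A (ap (lmat N i) 1) - ap A (ap (lmat N i) 0)) := by
    rw [Ls]
    exact Finset.sum_congr rfl fun i _ => len_mul_eq N hA i
  rw [hLs, covsum]
  have e : (1:ℝ)/((A.s:ℝ)^2) * (1 - endpt N (Mn N)) = (1 - endpt N (Mn N))/((A.s:ℝ)^2) := by ring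
  nlinarith [hkey, hlast]

theorem Ls_ge' {A : M2} (hA : Good A) (hN : 25 ≤ N) :
    (1 - 2 * delN N) * len A ≤ Ls N A := by
  have h1 := Ls_ge N hA (by omega)
  have h2 := covsum_ge (by omega : 3 ≤ N)
  have h3 := len_ge hA
  have hs := hA.sR
  have h4 : (0:ℝ) < (A.s:ℝ)^2 := by positivity
  have hδ0 : 0 ≤ delN N := by
    rw [delN]
    have : (25:ℝ) ≤ (N:ℝ) := by exact_mod_cast hN
    have a1 : 0 ≤ 2/((N:ℝ)-1) := div_nonneg (by norm_num) (by linarith)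
    have a2 : 0 ≤ 1/((N:ℝ)+2) := div_nonneg (by norm_num) (by linarith)
    linarith
  have h5 : (1/((A.s:ℝ)^2)) * (1 - covsum N) ≤ (1/((A.s:ℝ)^2)) * delN N := by
    apply mul_le_mul_of_nonneg_left (by linarith) (by positivity)
  have h6 : (1/((A.s:ℝ)^2)) * delN N ≤ 2 * delN N * len A := by
    have : 1/((A.s:ℝ)^2) ≤ 2 * len A := by
      have := len_ge hA
      calc 1/((A.s:ℝ)^2) = 2 * (1/(2*(A.s:ℝ)^2)) := by ring
      _ ≤ 2 * len A := by linarith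
    calc (1/((A.s:ℝ)^2)) * delN N ≤ (2 * len A) * delN N :=
          mul_le_mul_of_nonneg_right this hδ0
    _ = 2 * delN N * len A := by ring
  linarith

theorem Ls_pos (hN : 3 ≤ N) {A : M2} (hA : Good A) : 0 < Ls N A := by
  rw [Ls]
  apply Finset.sum_pos
  · intro i _
    exact len_pos (good_mul_bmat hA (ltrb_ge N i))
  · rw [Finset.nonempty_range_iff]
    rw [Mn]
    have : 0 < N - 2 := by omega
    positivity

end ChildSum
end RBD

namespace RBD
section Lam

variable (N : ℕ) (ω : ℕ → ℕ)

noncomputable def lam : ℕ → ℝ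
  | 0 => 1
  | n + 1 => lam n * len (pm N ω (n+1)) / Ls N (pm N ω n)

theorem lam_pos (hN : 3 ≤ N) (n : ℕ) : 0 < lam N ω n := by
  induction n with
  | zero => norm_num [lam]
  | succ n ih =>
      show 0 < lam N ω n * len (pm N ω (n+1)) / Ls N (pm N ω n)
      have h1 := len_pos (good_pm N ω (n+1))
      have h2 := Ls_pos N hN (good_pm N ω n)
      positivity

theorem one_sub_delN {N : ℕ} (hN : 25 ≤ N) : (3/4:ℝ) ≤ 1 - 2 * delN N := by
  have := delN_le hN
  linarith

theorem lam_mul_le (hN : 25 ≤ N) (n : ℕ) :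
    lam N ω n * (1 - 2 * delN N)^n ≤ len (pm N ω n) := by
  have hN3 : 3 ≤ N := by omega
  have h34 := one_sub_delN hN
  induction n with
  | zero => simp [lam, len_pm_zero]
  | succ n ih =>
      have hLs := Ls_ge' N (good_pm N ω n) hN
      have hLsp := Ls_pos N hN3 (good_pm N ω n)
      have hlen1 := len_pos (good_pm N ω (n+1))
      have hlenn := len_pos (good_pm N ω n)
      have hlam := lam_pos N ω hN3 n
      have e : lam N ω (n+1) * (1 - 2*delN N)^(n+1)
          = (lam N ω n * (1 - 2*delN N)^n) * ((1 - 2*delN N) * len (pm N ω (n+1)) / Ls N (pm N ω n)) := by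
        show lam N ω n * len (pm N ω (n+1)) / Ls N (pm N ω n) * (1 - 2*delN N)^(n+1) = _
        field_simp
        ring
      rw [e]
      have h2 : (1 - 2*delN N) * len (pm N ω (n+1)) / Ls N (pm N ω n) ≤ len (pm N ω (n+1)) / len (pm N ω n) := by
        rw [div_le_div_iff₀ hLsp hlenn]
        calc (1 - 2*delN N) * len (pm N ω (n+1)) * len (pm N ω n)
            = ((1 - 2*delN N) * len (pm N ω n)) * len (pm N ω (n+1)) := by ring
        _ ≤ Ls N (pm N ω n) * len (pm N ω (n+1)) := by
            apply mul_le_mul_of_nonneg_right hLs hlen1.le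
        _ = len (pm N ω (n+1)) * Ls N (pm N ω n) := by ring
      have hpos1 : 0 ≤ lam N ω n * (1 - 2*delN N)^n := mul_nonneg hlam.le (pow_nonneg (by linarith) n)
      calc (lam N ω n * (1 - 2*delN N)^n) * ((1 - 2*delN N) * len (pm N ω (n+1)) / Ls N (pm N ω n))
          ≤ (lam N ω n * (1 - 2*delN N)^n) * (len (pm N ω (n+1)) / len (pm N ω n)) :=
            mul_le_mul_of_nonneg_left h2 hpos1
      _ ≤ len (pm N ω n) * (len (pm N ω (n+1)) / len (pm N ω n)) := by
            exact mul_le_mul_of_nonneg_right ih (div_nonneg hlen1.le hlenn.le)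
      _ = len (pm N ω (n+1)) := by field_simp

theorem lam_le_pow (hN : 25 ≤ N) (n : ℕ) : lam N ω n ≤ (4/9:ℝ)^n := by
  have h34 := one_sub_delN hN
  have h1 := lam_mul_le N ω hN n
  have h2 := len_pm_le_pow N ω n
  have h3 : (3/4:ℝ)^n ≤ (1 - 2*delN N)^n := pow_le_pow_left₀ (by norm_num) h34 n
  have h4 : 0 < (3/4:ℝ)^n := by positivity
  have h5 : lam N ω n * (3/4)^n ≤ (1/3:ℝ)^n := by
    calc lam N ω n * (3/4)^n ≤ lam N ω n * (1 - 2*delN N)^n := by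
          apply mul_le_mul_of_nonneg_left h3 (lam_pos N ω (by omega) n).le
    _ ≤ len (pm N ω n) := h1
    _ ≤ (1/3:ℝ)^n := h2
  have e : (4/9:ℝ)^n = (1/3:ℝ)^n / (3/4:ℝ)^n := by
    rw [← div_pow]
    norm_num
  rw [e, le_div_iff₀ h4]
  exact h5

noncomputable def cumt (n : ℕ) : ℝ :=
  lam N ω n * (∑ i ∈ Finset.range (ω n), len (mulM (pm N ω n) (lmat N i))) / Ls N (pm N ω n)

noncomputable def leftT (n : ℕ) : ℝ := ∑ m ∈ Finset.range n, cumt N ω m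

noncomputable def Xt : ℝ := ⨆ n, leftT N ω n

theorem cumt_nonneg (hN : 3 ≤ N) (n : ℕ) : 0 ≤ cumt N ω n := by
  rw [cumt]
  have h1 := (lam_pos N ω hN n).le
  have h2 := (Ls_pos N hN (good_pm N ω n)).le
  have h3 : 0 ≤ ∑ i ∈ Finset.range (ω n), len (mulM (pm N ω n) (lmat N i)) :=
    Finset.sum_nonneg fun i _ => (len_pos (good_mul_bmat (good_pm N ω n) (ltrb_ge N i))).le
  positivity

theorem cumt_key (hN : 3 ≤ N) (n : ℕ) (hV : ω n < Mn N) :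
    cumt N ω n + lam N ω (n+1) ≤ lam N ω n := by
  have hLsp := Ls_pos N hN (good_pm N ω n)
  have hlam := (lam_pos N ω hN n).le
  have e1 : lam N ω (n+1) = lam N ω n * len (mulM (pm N ω n) (lmat N (ω n))) / Ls N (pm N ω n) := rfl
  have e2 : cumt N ω n + lam N ω (n+1)
      = lam N ω n * (∑ i ∈ Finset.range (ω n + 1), len (mulM (pm N ω n) (lmat N i))) / Ls N (pm N ω n) := by
    rw [cumt, e1, Finset.sum_range_succ]
    field_simp
  rw [e2]
  have hsub : ∑ i ∈ Finset.range (ω n + 1), len (mulM (pm N ω n) (lmat N i)) ≤ Ls N (pm N ω n) := by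
    rw [Ls]
    apply Finset.sum_le_sum_of_subset_of_nonneg
    · exact Finset.range_subset_range.mpr (by omega)
    · intro i _ _
      exact (len_pos (good_mul_bmat (good_pm N ω n) (ltrb_ge N i))).le
  rw [div_le_iff₀ hLsp]
  calc lam N ω n * (∑ i ∈ Finset.range (ω n + 1), len (mulM (pm N ω n) (lmat N i)))
      ≤ lam N ω n * Ls N (pm N ω n) := mul_le_mul_of_nonneg_left hsub hlam
  _ = lam N ω n * Ls N (pm N ω n) := rfl

theorem leftT_succ (n : ℕ) : leftT N ω (n+1) = leftT N ω n + cumt N ω n :=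
  Finset.sum_range_succ _ n

theorem leftT_mono (hN : 3 ≤ N) : Monotone (leftT N ω) := by
  apply monotone_nat_of_le_succ
  intro n
  rw [leftT_succ]
  linarith [cumt_nonneg N ω hN n]

theorem leftT_lam_anti (hN : 3 ≤ N) (hV : ∀ n, ω n < Mn N) {n m : ℕ} (hnm : n ≤ m) :
    leftT N ω m + lam N ω m ≤ leftT N ω n + lam N ω n := by
  induction m with
  | zero =>
      have h0 : n = 0 := by omega
      subst h0
      exact le_rfl
  | succ m ih =>
      rcases Nat.lt_or_ge n (m+1) with h | h
      · have h2 := ih (by omega)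
        have h3 := cumt_key N ω hN m (hV m)
        rw [leftT_succ]
        linarith
      · have hnm1 : n = m + 1 := by omega
        subst hnm1
        exact le_rfl

theorem leftT_bdd (hN : 3 ≤ N) (hV : ∀ n, ω n < Mn N) (n : ℕ) :
    leftT N ω n + lam N ω n ≤ 1 := by
  have h := leftT_lam_anti N ω hN hV (Nat.zero_le n)
  have e : leftT N ω 0 + lam N ω 0 = 1 := by
    rw [leftT, lam]
    simp
  linarith

theorem leftT_le_Xt (hN : 3 ≤ N) (hV : ∀ n, ω n < Mn N) (n : ℕ) : leftT N ω n ≤ Xt N ω := by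
  apply le_ciSup (f := leftT N ω) ?_ n
  refine ⟨1, ?_⟩
  rintro x ⟨m, rfl⟩
  have := leftT_bdd N ω hN hV m
  have := (lam_pos N ω hN m).le
  linarith

theorem Xt_le (hN : 3 ≤ N) (hV : ∀ n, ω n < Mn N) (n : ℕ) :
    Xt N ω ≤ leftT N ω n + lam N ω n := by
  apply ciSup_le
  intro m
  rcases le_or_gt m n with h | h
  · have := leftT_mono N ω hN h
    have := (lam_pos N ω hN n).le
    linarith
  · have h2 := leftT_lam_anti N ω hN hV h.le
    have := (lam_pos N ω hN m).le
    linarith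

theorem lam_congr {N : ℕ} {ω ω' : ℕ → ℕ} {n : ℕ} (h : ∀ k < n, ω k = ω' k) :
    lam N ω n = lam N ω' n := by
  induction n with
  | zero => rfl
  | succ n ih =>
      show lam N ω n * len (pm N ω (n+1)) / Ls N (pm N ω n) = lam N ω' n * len (pm N ω' (n+1)) / Ls N (pm N ω' n)
      rw [ih (fun k hk => h k (by omega))]
      rw [pm_congr (ω := ω) (ω' := ω') (n := n+1) (fun k hk => h k (by omega))]
      rw [pm_congr (ω := ω) (ω' := ω') (n := n) (fun k hk => h k (by omega))]

theorem leftT_congr {N : ℕ} {ω ω' : ℕ → ℕ} {n : ℕ} (h : ∀ k < n, ω k = ω' k) :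
    leftT N ω n = leftT N ω' n := by
  rw [leftT, leftT]
  apply Finset.sum_congr rfl
  intro m hm
  rw [Finset.mem_range] at hm
  rw [cumt, cumt, lam_congr (fun k hk => h k (by omega)), pm_congr (fun k hk => h k (by omega)),
    h m hm]

end Lam

section Gap

noncomputable def gamN (N : ℕ) : ℝ := 1/(4*(N:ℝ)^5)

theorem gamN_pos {N : ℕ} (hN : 3 ≤ N) : 0 < gamN N := by
  have : (0:ℝ) < (N:ℝ) := by exact_mod_cast (by omega : 0 < N)
  rw [gamN]
  positivity

theorem letter_gap {N : ℕ} (hN : 3 ≤ N) (i : ℕ) :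
    gamN N ≤ ap (lmat N i) 1 - ap (lmat N i) (1 - 1/(N:ℝ)) := by
  have hB := good_lmat N i
  have hNR : (3:ℝ) ≤ (N:ℝ) := by exact_mod_cast hN
  have hN0 : (0:ℝ) < (N:ℝ) := by linarith
  have hu0 : (0:ℝ) ≤ 1 - 1/(N:ℝ) := by
    have : 1/(N:ℝ) ≤ 1/3 := by apply one_div_le_one_div_of_le <;> linarith
    linarith
  have e := ap_sub hB hu0 zero_le_one
  rw [e]
  have hsle : ((lmat N i).s : ℝ) ≤ (N:ℝ)^2 := by
    have := lmat_s_le hN i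
    have h2 : (((lmat N i).s : ℤ) : ℝ) ≤ (((N:ℤ)^2 : ℤ):ℝ) := by exact_mod_cast this
    push_cast at h2
    linarith
  have hrs : ((lmat N i).r : ℝ) ≤ (lmat N i).s := by exact_mod_cast hB.hrs
  have hs := hB.sR
  have hr := hB.rR
  have hd1 : ((lmat N i).r : ℝ) * (1 - 1/(N:ℝ)) + (lmat N i).s ≤ 2*(N:ℝ)^2 := by
    have h1 : ((lmat N i).r:ℝ) * (1 - 1/(N:ℝ)) ≤ (lmat N i).r := by
      nlinarith [mul_nonneg hr (by positivity : (0:ℝ) ≤ 1/(N:ℝ))]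
    linarith
  have hd2 : ((lmat N i).r : ℝ) * 1 + (lmat N i).s ≤ 2*(N:ℝ)^2 := by linarith
  have hp1 := denom_pos hB hu0
  have hp2 := denom_pos hB (zero_le_one (α := ℝ))
  have hnum : 1 - (1 - 1/(N:ℝ)) = 1/(N:ℝ) := by ring
  rw [hnum]
  have hprod : (((lmat N i).r:ℝ) * (1 - 1/(N:ℝ)) + (lmat N i).s) * (((lmat N i).r:ℝ) * 1 + (lmat N i).s)
      ≤ 4*(N:ℝ)^4 := by
    calc (((lmat N i).r:ℝ) * (1 - 1/(N:ℝ)) + (lmat N i).s) * (((lmat N i).r:ℝ) * 1 + (lmat N i).s)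
        ≤ (2*(N:ℝ)^2) * (2*(N:ℝ)^2) := by
          apply mul_le_mul hd1 hd2 hp2.le (by positivity)
    _ = 4*(N:ℝ)^4 := by ring
  rw [gamN]
  rw [div_le_div_iff₀ (by positivity) (mul_pos hp1 hp2)]
  calc 1 * ((((lmat N i).r:ℝ) * (1 - 1/(N:ℝ)) + (lmat N i).s) * (((lmat N i).r:ℝ) * 1 + (lmat N i).s))
      ≤ 1 * (4*(N:ℝ)^4) := by
        apply mul_le_mul_of_nonneg_left hprod (by norm_num)
  _ = 1/(N:ℝ) * (4*(N:ℝ)^5) * ((N:ℝ)/(N:ℝ)) := by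
        field_simp
  _ = 1/(N:ℝ) * (4*(N:ℝ)^5) := by
        rw [div_self hN0.ne']
        ring

theorem diff_est {N : ℕ} (hN : 25 ≤ N) {ω ω' : ℕ → ℕ} {n : ℕ}
    (hpre : ∀ k < n, ω k = ω' k) (hlt : ω n < ω' n) (hM : ω' n < Mn N) :
    gamN N / 2 * len (pm N ω n) ≤ Xr N ω' - Xr N ω := by
  have hN3 : 3 ≤ N := by omega
  have hA := good_pm N ω n
  have hpm : pm N ω' n = pm N ω n := pm_congr (fun k hk => (hpre k hk).symm)
  have hNR : (3:ℝ) ≤ (N:ℝ) := by exact_mod_cast hN3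
  have hvN0 : (0:ℝ) ≤ 1 - 1/(N:ℝ) := by
    have : 1/(N:ℝ) ≤ 1/3 := by apply one_div_le_one_div_of_le <;> linarith
    linarith
  have hvN1 : (1 - 1/(N:ℝ)) ≤ 1 := by
    have : 0 < 1/(N:ℝ) := by positivity
    linarith
  set a : ℝ := ap (lmat N (ω n)) (1 - 1/(N:ℝ)) with hadef
  set a' : ℝ := ap (lmat N (ω' n)) 0 with ha'def
  have ha0 : 0 ≤ a := ap_nonneg (good_lmat N (ω n)) hvN0
  have ha'0 : 0 ≤ a' := ap_nonneg (good_lmat N (ω' n)) le_rfl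
  have ha1 : a ≤ 1 := ap_le_one (good_lmat N (ω n)) hvN0 hvN1
  have ha'1 : a' ≤ 1 := ap_le_one (good_lmat N (ω' n)) le_rfl zero_le_one
  have hgap : gamN N ≤ a' - a := by
    have h1 := letters_sorted hN3 hlt hM
    have h2 := letter_gap hN3 (ω n)
    rw [hadef, ha'def]
    linarith
  have hup : Xr N ω ≤ ap (pm N ω n) a := by
    have h1 := Xr_le_ap hN3 ω (n+1)
    have e : ap (pm N ω (n+1)) (1 - 1/(N:ℝ)) = ap (pm N ω n) a := by
      show ap (mulM (pm N ω n) (lmat N (ω n))) (1 - 1/(N:ℝ)) = _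
      rw [ap_mul hA (good_lmat N (ω n)) hvN0]
    rwa [e] at h1
  have hlow : ap (pm N ω n) a' ≤ Xr N ω' := by
    have h1 := lep_le_Xr N ω' (n+1)
    rw [lep_succ, hpm] at h1
    exact h1
  have hsub := ap_sub hA ha0 ha'0
  set S := pm N ω n
  have hs := hA.sR
  have hr := hA.rR
  have hrs : (S.r:ℝ) ≤ S.s := by exact_mod_cast hA.hrs
  have hf1 : (S.r:ℝ) * a + S.s ≤ (S.r:ℝ) + S.s := by nlinarith
  have hf2 : (S.r:ℝ) * a' + S.s ≤ (S.r:ℝ) + S.s := by nlinarith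
  have hp1 := denom_pos hA ha0
  have hp2 := denom_pos hA ha'0
  have hprodle : ((S.r:ℝ) * a + S.s) * ((S.r:ℝ) * a' + S.s) ≤ 2*(S.s:ℝ)*((S.r:ℝ)+S.s) := by
    calc ((S.r:ℝ) * a + S.s) * ((S.r:ℝ) * a' + S.s) ≤ ((S.r:ℝ) + S.s) * ((S.r:ℝ) + S.s) := by
          apply mul_le_mul hf1 hf2 hp2.le (by linarith)
    _ ≤ 2*(S.s:ℝ)*((S.r:ℝ)+S.s) := by nlinarith
  have hgam2 := gamN_pos hN3
  have hdiv : gamN N / (2*(S.s:ℝ)*((S.r:ℝ)+S.s)) ≤ (a' - a) / (((S.r:ℝ) * a + S.s) * ((S.r:ℝ) * a' + S.s)) := by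
    apply div_le_div₀ (by linarith) hgap (mul_pos hp1 hp2) hprodle
  have e2 : gamN N / (2*(S.s:ℝ)*((S.r:ℝ)+S.s)) = gamN N / 2 * len S := by
    rw [len, mul_one_div, div_div, mul_assoc]
  rw [← e2]
  linarith [hdiv, hsub, hup, hlow]

theorem tdiff_est {N : ℕ} (hN : 3 ≤ N) {ω ω' : ℕ → ℕ} {n : ℕ}
    (hpre : ∀ k < n, ω k = ω' k) (hV : ∀ m, ω m < Mn N) (hV' : ∀ m, ω' m < Mn N) :
    |Xt N ω - Xt N ω'| ≤ lam N ω n := by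
  have h1 := leftT_le_Xt N ω hN hV n
  have h2 := Xt_le N ω hN hV n
  have h3 := leftT_le_Xt N ω' hN hV' n
  have h4 := Xt_le N ω' hN hV' n
  rw [← leftT_congr hpre] at h3
  rw [← leftT_congr hpre, ← lam_congr hpre] at h4
  rw [abs_le]
  constructor <;> linarith

end Gap
end RBD

namespace RBD
section Greedy

variable (N : ℕ)

open Classical in
noncomputable def pick (t : ℝ) (ω : ℕ → ℕ) (n : ℕ) : ℕ :=
  if h : ∃ j, t < leftT N ω n
      + lam N ω n * (∑ i ∈ Finset.range (j+1), len (mulM (pm N ω n) (lmat N i))) / Ls N (pm N ω n)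
  then Nat.find h else 0

theorem pick_spec (hN : 3 ≤ N) {t : ℝ} {ω : ℕ → ℕ} {n : ℕ}
    (hInv1 : leftT N ω n ≤ t) (hInv2 : t < leftT N ω n + lam N ω n) :
    pick N t ω n < Mn N ∧
    leftT N ω n + lam N ω n * (∑ i ∈ Finset.range (pick N t ω n), len (mulM (pm N ω n) (lmat N i))) / Ls N (pm N ω n) ≤ t ∧
    t < leftT N ω n + lam N ω n * (∑ i ∈ Finset.range (pick N t ω n + 1), len (mulM (pm N ω n) (lmat N i))) / Ls N (pm N ω n) := by
  have hLs := Ls_pos N hN (good_pm N ω n)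
  have hMn : 1 ≤ Mn N := by
    rw [Mn]
    have h1 : 0 < N - 2 := by omega
    have h2 : 0 < N + 1 := by omega
    exact Nat.one_le_iff_ne_zero.mpr (by positivity)
  have hwit : t < leftT N ω n
      + lam N ω n * (∑ i ∈ Finset.range ((Mn N - 1)+1), len (mulM (pm N ω n) (lmat N i))) / Ls N (pm N ω n) := by
    have e1 : (Mn N - 1) + 1 = Mn N := by omega
    rw [e1]
    have e2 : (∑ i ∈ Finset.range (Mn N), len (mulM (pm N ω n) (lmat N i))) = Ls N (pm N ω n) := rfl
    rw [e2, mul_div_assoc, div_self hLs.ne', mul_one]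
    exact hInv2
  have h : ∃ j, t < leftT N ω n
      + lam N ω n * (∑ i ∈ Finset.range (j+1), len (mulM (pm N ω n) (lmat N i))) / Ls N (pm N ω n) :=
    ⟨Mn N - 1, hwit⟩
  rw [pick, dif_pos h]
  refine ⟨?_, ?_, Nat.find_spec h⟩
  · have := Nat.find_min' h hwit
    omega
  · rcases Nat.eq_zero_or_pos (Nat.find h) with h0 | h0
    · rw [h0]
      simp only [Finset.range_zero, Finset.sum_empty, mul_zero, zero_div, add_zero]
      exact hInv1
    · have hmin := Nat.find_min h (m := Nat.find h - 1) (by omega)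
      push_neg at hmin
      have e : Nat.find h - 1 + 1 = Nat.find h := by omega
      rwa [e] at hmin

noncomputable def gfun (t : ℝ) : ℕ → (ℕ → ℕ)
  | 0 => fun _ => 0
  | n+1 => Function.update (gfun t n) n (pick N t (gfun t n) n)

noncomputable def gw (t : ℝ) : ℕ → ℕ := fun n => gfun N t (n+1) n

theorem gfun_eq_gw (t : ℝ) : ∀ n k, k < n → gfun N t n k = gw N t k := by
  intro n
  induction n with
  | zero => intro k hk; omega
  | succ n ih =>
      intro k hk
      rcases Nat.lt_or_ge k n with h | h
      · show Function.update (gfun N t n) n (pick N t (gfun N t n) n) k = gw N t k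
        rw [Function.update_of_ne (by omega)]
        exact ih k h
      · have : k = n := by omega
        subst this
        rfl

theorem gw_eq_pick (t : ℝ) (n : ℕ) : gw N t n = pick N t (gfun N t n) n := by
  show Function.update (gfun N t n) n (pick N t (gfun N t n) n) n = _
  rw [Function.update_self]

theorem greedy_inv (hN : 3 ≤ N) {t : ℝ} (ht0 : 0 ≤ t) (ht1 : t < 1) :
    ∀ n, (leftT N (gw N t) n ≤ t ∧ t < leftT N (gw N t) n + lam N (gw N t) n) ∧ gw N t n < Mn N := by
  intro n
  induction n with
  | zero =>
      have hl : leftT N (gw N t) 0 = 0 := by simp [leftT]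
      have hlam : lam N (gw N t) 0 = 1 := rfl
      have hbase : leftT N (gw N t) 0 ≤ t ∧ t < leftT N (gw N t) 0 + lam N (gw N t) 0 := by
        rw [hl, hlam]; constructor <;> linarith
      refine ⟨hbase, ?_⟩
      -- gw 0 = pick with the level-0 invariant
      have hagree : ∀ k < 0, gfun N t 0 k = gw N t k := by omega
      have hps := pick_spec N hN (t := t) (ω := gfun N t 0) (n := 0)
        (by rw [leftT_congr (fun k hk => hagree k hk)]; exact hbase.1)
        (by rw [leftT_congr (fun k hk => hagree k hk), lam_congr (fun k hk => hagree k hk)]; exact hbase.2)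
      rw [gw_eq_pick]
      exact hps.1
  | succ n ih =>
      obtain ⟨⟨h1, h2⟩, hMn⟩ := ih
      have hagree : ∀ k < n, gfun N t n k = gw N t k := gfun_eq_gw N t n
      have hLc : leftT N (gfun N t n) n = leftT N (gw N t) n := leftT_congr hagree
      have hlc : lam N (gfun N t n) n = lam N (gw N t) n := lam_congr hagree
      have hpc : pm N (gfun N t n) n = pm N (gw N t) n := pm_congr hagree
      have hps := pick_spec N hN (t := t) (ω := gfun N t n) (n := n)
        (by rw [hLc]; exact h1) (by rw [hLc, hlc]; exact h2)
      rw [hpc, hlc, hLc, ← gw_eq_pick] at hps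
      obtain ⟨hpickM, hlow, hup⟩ := hps
      have hLs := Ls_pos N hN (good_pm N (gw N t) n)
      have e1 : leftT N (gw N t) (n+1) = leftT N (gw N t) n
          + lam N (gw N t) n * (∑ i ∈ Finset.range (gw N t n), len (mulM (pm N (gw N t) n) (lmat N i))) / Ls N (pm N (gw N t) n) := by
        rw [leftT_succ, cumt]
      have e2 : lam N (gw N t) (n+1)
          = lam N (gw N t) n * len (mulM (pm N (gw N t) n) (lmat N (gw N t n))) / Ls N (pm N (gw N t) n) := rfl
      constructor
      · constructor
        · rw [e1]
          exact hlow
        · rw [e1, e2]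
          have e3 : ∑ i ∈ Finset.range (gw N t n + 1), len (mulM (pm N (gw N t) n) (lmat N i))
              = (∑ i ∈ Finset.range (gw N t n), len (mulM (pm N (gw N t) n) (lmat N i)))
                + len (mulM (pm N (gw N t) n) (lmat N (gw N t n))) := Finset.sum_range_succ _ _
          rw [e3] at hup
          have e4 : leftT N (gw N t) n
              + lam N (gw N t) n * ((∑ i ∈ Finset.range (gw N t n), len (mulM (pm N (gw N t) n) (lmat N i)))
                + len (mulM (pm N (gw N t) n) (lmat N (gw N t n)))) / Ls N (pm N (gw N t) n)
              = leftT N (gw N t) n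
              + lam N (gw N t) n * (∑ i ∈ Finset.range (gw N t n), len (mulM (pm N (gw N t) n) (lmat N i))) / Ls N (pm N (gw N t) n)
              + lam N (gw N t) n * len (mulM (pm N (gw N t) n) (lmat N (gw N t n))) / Ls N (pm N (gw N t) n) := by
            field_simp
            ring
          rw [e4] at hup
          exact hup
      · -- validity at n+1
        have hagree1 : ∀ k < n+1, gfun N t (n+1) k = gw N t k := gfun_eq_gw N t (n+1)
        have hInv1' : leftT N (gw N t) (n+1) ≤ t := by
          rw [e1]
          exact hlow
        have hInv2' : t < leftT N (gw N t) (n+1) + lam N (gw N t) (n+1) := by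
          rw [e1, e2]
          have e3 : ∑ i ∈ Finset.range (gw N t n + 1), len (mulM (pm N (gw N t) n) (lmat N i))
              = (∑ i ∈ Finset.range (gw N t n), len (mulM (pm N (gw N t) n) (lmat N i)))
                + len (mulM (pm N (gw N t) n) (lmat N (gw N t n))) := Finset.sum_range_succ _ _
          rw [e3] at hup
          have hLs' := hLs
          calc t < _ := hup
          _ = _ := by field_simp; ring
        have hps1 := pick_spec N hN (t := t) (ω := gfun N t (n+1)) (n := n+1)
          (by rw [leftT_congr hagree1]; exact hInv1')
          (by rw [leftT_congr hagree1, lam_congr hagree1]; exact hInv2')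
        rw [← gw_eq_pick] at hps1
        exact hps1.1

theorem Xt_gw (hN : 25 ≤ N) {t : ℝ} (ht0 : 0 ≤ t) (ht1 : t < 1) : Xt N (gw N t) = t := by
  have hN3 : 3 ≤ N := by omega
  have hV : ∀ n, gw N t n < Mn N := fun n => (greedy_inv N hN3 ht0 ht1 n).2
  have key : ∀ n, |Xt N (gw N t) - t| ≤ (4/9:ℝ)^n := by
    intro n
    obtain ⟨⟨h1, h2⟩, _⟩ := greedy_inv N hN3 ht0 ht1 n
    have h3 := leftT_le_Xt N (gw N t) hN3 hV n
    have h4 := Xt_le N (gw N t) hN3 hV n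
    have h5 := lam_le_pow N (gw N t) hN n
    rw [abs_le]
    constructor <;> linarith
  have h0 : Filter.Tendsto (fun n : ℕ => (4/9:ℝ)^n) Filter.atTop (nhds 0) := by
    apply tendsto_pow_atTop_nhds_zero_of_lt_one <;> norm_num
  have hz : |Xt N (gw N t) - t| ≤ 0 := ge_of_tendsto h0 (Filter.Eventually.of_forall key)
  have hz2 : Xt N (gw N t) - t = 0 := abs_eq_zero.mp (le_antisymm hz (abs_nonneg _))
  linarith

end Greedy
end RBD

namespace RBD
section Main

theorem lam_le_rpow {N : ℕ} (hN : 25 ≤ N) {s : ℝ} (hs0 : 0 < s) (hs1 : s < 1)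
    (hcond : (1/3:ℝ)^(1-s) ≤ 1 - 2*delN N) (ω : ℕ → ℕ) (n : ℕ) :
    lam N ω n ≤ (len (pm N ω n)) ^ s := by
  have hδ := one_sub_delN hN
  have hlp := len_pos (good_pm N ω n)
  have hll := len_pm_le_pow N ω n
  have h1 := lam_mul_le N ω hN n
  have hc : (0:ℝ) < (1 - 2*delN N)^n := by positivity
  -- len^(1-s) ≤ (1-2δ)^n
  have h2 : (len (pm N ω n)) ^ (1-s) ≤ ((1/3:ℝ)^(1-s))^n := by
    have ha : (len (pm N ω n)) ^ (1-s) ≤ ((1/3:ℝ)^n) ^ (1-s) :=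
      Real.rpow_le_rpow hlp.le hll (by linarith)
    have hb : ((1/3:ℝ)^n : ℝ) ^ (1-s) = ((1/3:ℝ)^(1-s))^n := by
      rw [← Real.rpow_natCast ((1/3:ℝ)) n, ← Real.rpow_mul (by norm_num),
        mul_comm, Real.rpow_mul (by norm_num), Real.rpow_natCast]
    rw [hb] at ha
    exact ha
  have h3 : ((1/3:ℝ)^(1-s))^n ≤ (1 - 2*delN N)^n :=
    pow_le_pow_left₀ (Real.rpow_nonneg (by norm_num) _) hcond n
  have h4 : len (pm N ω n) = (len (pm N ω n))^(1-s) * (len (pm N ω n))^s := by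
    rw [← Real.rpow_add hlp]
    norm_num
  have h5 : lam N ω n * (1 - 2*delN N)^n ≤ (1 - 2*delN N)^n * (len (pm N ω n))^s := by
    calc lam N ω n * (1 - 2*delN N)^n ≤ len (pm N ω n) := h1
    _ = (len (pm N ω n))^(1-s) * (len (pm N ω n))^s := h4
    _ ≤ (1 - 2*delN N)^n * (len (pm N ω n))^s := by
        apply mul_le_mul_of_nonneg_right (h2.trans h3) (Real.rpow_nonneg hlp.le s)
  have := (mul_le_mul_iff_of_pos_right hc).mp (by linarith [h5] : lam N ω n * (1 - 2*delN N)^n ≤ (len (pm N ω n))^s * (1 - 2*delN N)^n)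
  exact this

theorem holder_ordered {N : ℕ} (hN : 25 ≤ N) {s : ℝ} (hs0 : 0 < s) (hs1 : s < 1)
    (hcond : (1/3:ℝ)^(1-s) ≤ 1 - 2*delN N) {ω ω' : ℕ → ℕ} {n : ℕ}
    (hpre : ∀ k < n, ω k = ω' k) (hlt : ω n < ω' n)
    (hV : ∀ m, ω m < Mn N) (hV' : ∀ m, ω' m < Mn N) :
    |Xt N ω - Xt N ω'| ≤ (2/gamN N)^s * |Xr N ω - Xr N ω'|^s ∧ Xr N ω < Xr N ω' := by
  have hN3 : 3 ≤ N := by omega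
  have hd := diff_est hN hpre hlt (hV' n)
  have hγ := gamN_pos hN3
  have hlp := len_pos (good_pm N ω n)
  have hXlt : Xr N ω < Xr N ω' := by nlinarith
  refine ⟨?_, hXlt⟩
  have habs : |Xr N ω - Xr N ω'| = Xr N ω' - Xr N ω := by
    rw [abs_sub_comm]
    exact abs_of_pos (by linarith)
  have hlen_le : len (pm N ω n) ≤ (2/gamN N) * |Xr N ω - Xr N ω'| := by
    rw [habs]
    rw [div_mul_eq_mul_div, le_div_iff₀ hγ]
    nlinarith
  have ht := tdiff_est hN3 hpre hV hV'
  have hlam := lam_le_rpow hN hs0 hs1 hcond ω n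
  have hmono : (len (pm N ω n))^s ≤ ((2/gamN N) * |Xr N ω - Xr N ω'|)^s :=
    Real.rpow_le_rpow hlp.le hlen_le hs0.le
  have hsplit : ((2/gamN N) * |Xr N ω - Xr N ω'|)^s = (2/gamN N)^s * |Xr N ω - Xr N ω'|^s :=
    Real.mul_rpow (by positivity) (abs_nonneg _)
  calc |Xt N ω - Xt N ω'| ≤ lam N ω n := ht
  _ ≤ (len (pm N ω n))^s := hlam
  _ ≤ ((2/gamN N) * |Xr N ω - Xr N ω'|)^s := hmono
  _ = (2/gamN N)^s * |Xr N ω - Xr N ω'|^s := hsplit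

theorem holder_pair {N : ℕ} (hN : 25 ≤ N) {s : ℝ} (hs0 : 0 < s) (hs1 : s < 1)
    (hcond : (1/3:ℝ)^(1-s) ≤ 1 - 2*delN N) {ω ω' : ℕ → ℕ}
    (hV : ∀ m, ω m < Mn N) (hV' : ∀ m, ω' m < Mn N) (hne : ω ≠ ω') :
    |Xt N ω - Xt N ω'| ≤ (2/gamN N)^s * |Xr N ω - Xr N ω'|^s ∧ Xr N ω ≠ Xr N ω' := by
  classical
  have hfd : ∃ n, ω n ≠ ω' n := Function.ne_iff.mp hne
  set n := Nat.find hfd with hn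
  have hne_n : ω n ≠ ω' n := Nat.find_spec hfd
  have hpre : ∀ k < n, ω k = ω' k := fun k hk => not_not.mp (Nat.find_min hfd hk)
  rcases lt_trichotomy (ω n) (ω' n) with h | h | h
  · obtain ⟨h1, h2⟩ := holder_ordered hN hs0 hs1 hcond hpre h hV hV'
    exact ⟨h1, h2.ne⟩
  · exact absurd h hne_n
  · obtain ⟨h1, h2⟩ := holder_ordered hN hs0 hs1 hcond (fun k hk => (hpre k hk).symm) h hV' hV
    rw [abs_sub_comm (Xt N ω') (Xt N ω), abs_sub_comm (Xr N ω') (Xr N ω)] at h1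
    exact ⟨h1, h2.ne'⟩

theorem delN_small {ε : ℝ} (hε : 0 < ε) : ∃ N : ℕ, 25 ≤ N ∧ 2 * delN N ≤ ε := by
  obtain ⟨m, hm⟩ := exists_nat_gt (6/ε)
  refine ⟨max 25 (m+1), le_max_left _ _, ?_⟩
  set N := max 25 (m+1)
  have hm0 : (0:ℝ) < m := lt_of_le_of_lt (by positivity) hm
  have hN25 : (25:ℕ) ≤ N := le_max_left _ _
  have hNm : (m:ℝ) ≤ (N:ℝ) - 1 := by
    have : m + 1 ≤ N := le_max_right _ _
    have := (Nat.cast_le (α := ℝ)).mpr this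
    push_cast at this
    linarith
  have hNR : (25:ℝ) ≤ (N:ℝ) := by exact_mod_cast hN25
  have h1 : 2 * delN N = 4/((N:ℝ)-1) + 2/((N:ℝ)+2) := by rw [delN]; ring
  have h2 : 2/((N:ℝ)+2) ≤ 2/((N:ℝ)-1) := by
    apply div_le_div_of_nonneg_left (by norm_num) (by linarith) (by linarith)
  have h3 : 6/((N:ℝ)-1) ≤ 6/(m:ℝ) := by
    apply div_le_div_of_nonneg_left (by norm_num) hm0 hNm
  have h4 : 6/(m:ℝ) ≤ ε := by
    rw [div_le_iff₀ hm0]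
    rw [div_lt_iff₀ hε] at hm
    linarith
  rw [h1]
  have h5 : 4/((N:ℝ)-1) + 2/((N:ℝ)-1) = 6/((N:ℝ)-1) := by ring
  linarith

end Main
end RBD

open scoped ENNReal NNReal
namespace RBD

theorem main_lower {r : ℝ≥0} (hr : (r:ℝ≥0∞) < 1) :
    (r:ℝ≥0∞) ≤ dimH {x : ℝ | x ∈ Set.Ioo (0:ℝ) 1 ∧ Irrational x ∧
      ∃ N : ℤ, ∀ j : ℕ, 1 ≤ j → bcf j x ≤ N} := by
  classical
  set T := {x : ℝ | x ∈ Set.Ioo (0:ℝ) 1 ∧ Irrational x ∧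
      ∃ N : ℤ, ∀ j : ℕ, 1 ≤ j → bcf j x ≤ N} with hT
  have hr1 : r < 1 := ENNReal.coe_lt_one_iff.mp hr
  have hrR : (r:ℝ) < 1 := by exact_mod_cast hr1
  set s : ℝ := max (r:ℝ) (1/2) with hs
  have hs0 : (0:ℝ) < s := lt_of_lt_of_le (by norm_num) (le_max_right _ _)
  have hs1 : s < 1 := max_lt hrR (by norm_num)
  have hε : 0 < 1 - (1/3:ℝ)^(1-s) := by
    have := Real.rpow_lt_one (by norm_num : (0:ℝ) ≤ 1/3) (by norm_num) (by linarith : 0 < 1-s)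
    linarith
  obtain ⟨N, hN25, hNd⟩ := delN_small hε
  have hcond : (1/3:ℝ)^(1-s) ≤ 1 - 2*delN N := by linarith
  have hN3 : 3 ≤ N := by omega
  set V : Set (ℕ → ℕ) := {ω | ∀ n, ω n < Mn N} with hV
  have hinj : Set.InjOn (Xr N) V := by
    intro ω hω ω' hω' heq
    by_contra hne
    exact (holder_pair hN25 hs0 hs1 hcond hω hω' hne).2 heq
  set ψ : ℝ → ℝ := fun y => Xt N (Function.invFunOn (Xr N) V y) with hψ
  have hψeq : ∀ ω ∈ V, ψ (Xr N ω) = Xt N ω := by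
    intro ω hω
    have hex : ∃ a ∈ V, Xr N a = Xr N ω := ⟨ω, hω, rfl⟩
    have hmem := Function.invFunOn_mem hex
    have heq := Function.invFunOn_eq hex
    have he2 : Function.invFunOn (Xr N) V (Xr N ω) = ω := hinj hmem hω heq
    rw [hψ]
    simp only
    rw [he2]
  set C : ℝ≥0 := Real.toNNReal ((2/gamN N)^s) with hC
  set rr : ℝ≥0 := Real.toNNReal s with hrr
  have hrrpos : 0 < rr := by rw [hrr]; exact Real.toNNReal_pos.mpr hs0
  have hrrR : (rr : ℝ) = s := Real.coe_toNNReal s hs0.le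
  have hHol : HolderOnWith C rr ψ (Xr N '' V) := by
    intro x hx y hy
    obtain ⟨ω, hω, rfl⟩ := hx
    obtain ⟨ω', hω', rfl⟩ := hy
    rcases eq_or_ne ω ω' with rfl | hne
    · simp
    · obtain ⟨hest, _⟩ := holder_pair hN25 hs0 hs1 hcond hω hω' hne
      rw [hψeq ω hω, hψeq ω' hω']
      rw [edist_dist, edist_dist, Real.dist_eq, Real.dist_eq]
      have h2 : ENNReal.ofReal |Xt N ω - Xt N ω'|
          ≤ ENNReal.ofReal ((2/gamN N)^s * |Xr N ω - Xr N ω'|^s) :=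
        ENNReal.ofReal_le_ofReal hest
      have h3 : ENNReal.ofReal ((2/gamN N)^s * |Xr N ω - Xr N ω'|^s)
          = ENNReal.ofReal ((2/gamN N)^s) * ENNReal.ofReal (|Xr N ω - Xr N ω'|^s) := by
        rw [ENNReal.ofReal_mul (Real.rpow_nonneg (div_nonneg (by norm_num) (gamN_pos hN3).le) s)]
      have h4 : ENNReal.ofReal (|Xr N ω - Xr N ω'|^s)
          = ENNReal.ofReal |Xr N ω - Xr N ω'| ^ s :=
        (ENNReal.ofReal_rpow_of_nonneg (abs_nonneg _) hs0.le).symm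
      have h5 : (C : ℝ≥0∞) = ENNReal.ofReal ((2/gamN N)^s) := by
        rw [hC, ENNReal.ofReal]
      rw [hrrR, h5]
      rw [h3, h4] at h2
      exact h2
  have hsurj : Set.Ico (0:ℝ) 1 ⊆ ψ '' (Xr N '' V) := by
    rintro t ⟨ht0, ht1⟩
    have hVg : gw N t ∈ V := fun n => (greedy_inv N hN3 ht0 ht1 n).2
    refine ⟨Xr N (gw N t), ⟨gw N t, hVg, rfl⟩, ?_⟩
    rw [hψeq _ hVg, Xt_gw N hN25 ht0 ht1]
  have hIco : dimH (Set.Ico (0:ℝ) 1) = 1 := by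
    have h : (interior (Set.Ico (0:ℝ) 1)).Nonempty := by
      rw [interior_Ico]
      exact ⟨1/2, by norm_num⟩
    simpa using Real.dimH_of_nonempty_interior h
  have h6 : dimH (ψ '' (Xr N '' V)) ≤ dimH (Xr N '' V) / rr := hHol.dimH_image_le hrrpos
  have h7 : (1:ℝ≥0∞) ≤ dimH (Xr N '' V) / rr := by
    rw [← hIco]
    exact le_trans (dimH_mono hsurj) h6
  have h8 : (rr:ℝ≥0∞) ≤ dimH (Xr N '' V) := by
    rw [ENNReal.le_div_iff_mul_le (Or.inl (by exact_mod_cast hrrpos.ne')) (Or.inl ENNReal.coe_ne_top), one_mul] at h7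
    exact h7
  have hsub : Xr N '' V ⊆ T := by
    rintro x ⟨ω, hω, rfl⟩
    exact ⟨Set.mem_Ioo.mpr ⟨Xr_pos' N ω, Xr_lt_one hN3 ω⟩, Xr_irrational N ω hN3,
      ⟨(N:ℤ)+1, fun j hj => bcf_le N ω hN3 j hj⟩⟩
  have h9 : (rr:ℝ≥0∞) ≤ dimH T := le_trans h8 (dimH_mono hsub)
  refine le_trans ?_ h9
  rw [ENNReal.coe_le_coe, hrr]
  exact (Real.le_toNNReal_iff_coe_le hs0.le).mpr (le_max_left _ _)

end RBD


/-- The set of irrational numbers in `(0,1)` with bounded backward continued fraction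
digits has Hausdorff dimension 1. -/
theorem renyi_bounded_digits_full_dimension :
    dimH {x : ℝ | x ∈ Set.Ioo (0 : ℝ) 1 ∧ Irrational x ∧
      ∃ N : ℤ, ∀ j : ℕ, 1 ≤ j → bcf j x ≤ N} = 1 := by
  apply le_antisymm
  · calc dimH {x : ℝ | x ∈ Set.Ioo (0 : ℝ) 1 ∧ Irrational x ∧
        ∃ N : ℤ, ∀ j : ℕ, 1 ≤ j → bcf j x ≤ N} ≤ dimH (Set.univ : Set ℝ) :=
          dimH_mono (Set.subset_univ _)
    _ = 1 := Real.dimH_univ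
  · exact ENNReal.le_of_forall_nnreal_lt (fun r hr => RBD.main_lower hr)
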